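/- arXiv:2006.03567 — 6 statements merged into one kernel-verified Lean document; each statement's English description precedes it below -/
import Mathlib

section
/- For a path graph P_n with n ≥ 2 vertices and n odd, the line completion number of P_n equals (n-1)/2; that is, the least r such that the super line graph L_r(P_n) is complete is (n-1)/2. -/
open SimpleGraph

def shareVertex {V : Type*} (e f : Sym2 V) : Prop := ∃ v, v ∈ e ∧ v ∈ f

def SuperLineComplete {V : Type*} (G : SimpleGraph V) (r : ℕ) : Prop :=
  ∀ A B : Finset (Sym2 V), ↑A ⊆ G.edgeSet → ↑B ⊆ G.edgeSet →
    A.card = r → B.card = r → A ≠ B →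
    ∃ e ∈ A, ∃ f ∈ B, e ≠ f ∧ shareVertex e f

def lcIs {V : Type*} (G : SimpleGraph V) (k : ℕ) : Prop :=
  IsLeast {r : ℕ | 0 < r ∧ SuperLineComplete G r} k

def gridGraph (n m : ℕ) : SimpleGraph (Fin n × Fin m) :=
  (pathGraph n).boxProd (pathGraph m)

/-- Index of an edge of a path: the smaller endpoint. -/
def idx {n : ℕ} (e : Sym2 (Fin n)) : ℕ :=
  Sym2.lift ⟨fun u v => min u.val v.val, fun u v => min_comm _ _⟩ e

lemma idx_mk {n : ℕ} (u v : Fin n) : idx s(u, v) = min u.val v.val := rfl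

lemma edge_char {n : ℕ} {e : Sym2 (Fin n)} (he : e ∈ (pathGraph n).edgeSet) :
    ∃ h : idx e + 1 < n, e = s(⟨idx e, by omega⟩, ⟨idx e + 1, h⟩) := by
  induction e using Sym2.ind with
  | _ u v =>
    rw [SimpleGraph.mem_edgeSet, pathGraph_adj] at he
    have hu := u.isLt
    have hv := v.isLt
    rcases he with h | h
    · have hidx : idx s(u, v) = u.val := by rw [idx_mk]; omega
      refine ⟨by omega, Sym2.ext fun w => ?_⟩
      simp [Sym2.mem_iff, Fin.ext_iff, hidx]
      omega
    · have hidx : idx s(u, v) = v.val := by rw [idx_mk]; omega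
      refine ⟨by omega, Sym2.ext fun w => ?_⟩
      simp [Sym2.mem_iff, Fin.ext_iff, hidx]
      omega

lemma idx_lt {n : ℕ} {e : Sym2 (Fin n)} (he : e ∈ (pathGraph n).edgeSet) :
    idx e + 1 < n := (edge_char he).1

lemma idx_inj {n : ℕ} {e f : Sym2 (Fin n)} (he : e ∈ (pathGraph n).edgeSet)
    (hf : f ∈ (pathGraph n).edgeSet) (h : idx e = idx f) : e = f := by
  obtain ⟨h1, he'⟩ := edge_char he
  obtain ⟨h2, hf'⟩ := edge_char hf
  rw [he', hf']
  congr 1 <;> ext <;> simp [h]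

lemma mem_iff_val {n : ℕ} {e : Sym2 (Fin n)} (he : e ∈ (pathGraph n).edgeSet)
    (v : Fin n) : v ∈ e ↔ v.val = idx e ∨ v.val = idx e + 1 := by
  obtain ⟨h1, he'⟩ := edge_char he
  conv_lhs => rw [he']
  rw [Sym2.mem_iff]
  constructor
  · rintro (rfl | rfl) <;> simp
  · rintro (h | h) <;> [left; right] <;> ext <;> simpa

lemma shareVertex_idx {n : ℕ} {e f : Sym2 (Fin n)} (he : e ∈ (pathGraph n).edgeSet)
    (hf : f ∈ (pathGraph n).edgeSet) (h : shareVertex e f) :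
    idx f ≤ idx e + 1 ∧ idx e ≤ idx f + 1 := by
  obtain ⟨v, hv1, hv2⟩ := h
  rw [mem_iff_val he] at hv1
  rw [mem_iff_val hf] at hv2
  omega

lemma shareVertex_succ {n : ℕ} {e f : Sym2 (Fin n)} (he : e ∈ (pathGraph n).edgeSet)
    (hf : f ∈ (pathGraph n).edgeSet) (h : idx e + 1 = idx f) : shareVertex e f := by
  obtain ⟨h1, he'⟩ := edge_char he
  refine ⟨⟨idx e + 1, h1⟩, ?_, ?_⟩
  · rw [mem_iff_val he]; right; rfl
  · rw [mem_iff_val hf]; left; simpa using h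

/-- The key combinatorial lemma. -/
lemma key (k : ℕ) (A B : Finset ℕ) (hA : A ⊆ Finset.range (2 * k))
    (hB : B ⊆ Finset.range (2 * k)) (cA : A.card = k) (cB : B.card = k) (hne : A ≠ B)
    (H : ∀ a ∈ A, ∀ b ∈ B, a ≠ b → a + 1 ≠ b ∧ b + 1 ≠ a) : False := by
  classical
  set S := A ∪ B with hS
  have hSsub : S ⊆ Finset.range (2 * k + 1) := by
    intro x hx
    have := Finset.union_subset hA hB hx
    simp only [Finset.mem_range] at this ⊢
    omega
  have hcard : S.card + (A ∩ B).card = 2 * k := by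
    rw [hS, Finset.card_union_add_card_inter, cA, cB]; omega
  -- nonempty differences
  have hAB : (A \ B).Nonempty := by
    rw [Finset.sdiff_nonempty]
    intro hsub
    exact hne (Finset.eq_of_subset_of_card_le hsub (by omega))
  have hBA : (B \ A).Nonempty := by
    rw [Finset.sdiff_nonempty]
    intro hsub
    exact hne (Finset.eq_of_subset_of_card_le hsub (by omega)).symm
  obtain ⟨a, haA, hamax⟩ : ∃ a, a ∈ A \ B ∧ ∀ x ∈ A \ B, x ≤ a :=
    ⟨(A \ B).max' hAB, (A \ B).max'_mem hAB, fun x hx => (A \ B).le_max' x hx⟩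
  obtain ⟨b, hbB, hbmax⟩ : ∃ b, b ∈ B \ A ∧ ∀ x ∈ B \ A, x ≤ b :=
    ⟨(B \ A).max' hBA, (B \ A).max'_mem hBA, fun x hx => (B \ A).le_max' x hx⟩
  rw [Finset.mem_sdiff] at haA hbB
  -- successors of elements of E are not in S
  have succ_a : a + 1 ∉ S := by
    intro hmem
    rcases Finset.mem_union.mp hmem with h | h
    · by_cases hb' : a + 1 ∈ B
      · exact ((H a haA.1 (a+1) hb' (by omega)).1 rfl)
      · have : a + 1 ∈ A \ B := Finset.mem_sdiff.mpr ⟨h, hb'⟩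
        have := hamax _ this
        omega
    · exact ((H a haA.1 (a+1) h (by omega)).1 rfl)
  have succ_b : b + 1 ∉ S := by
    intro hmem
    rcases Finset.mem_union.mp hmem with h | h
    · exact ((H (b+1) h b hbB.1 (by omega)).2 rfl)
    · by_cases ha' : b + 1 ∈ A
      · exact ((H (b+1) ha' b hbB.1 (by omega)).2 rfl)
      · have : b + 1 ∈ B \ A := Finset.mem_sdiff.mpr ⟨h, ha'⟩
        have := hbmax _ this
        omega
  have succ_c : ∀ c ∈ A ∩ B, c + 1 ∉ S := by
    intro c hc hmem
    rw [Finset.mem_inter] at hc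
    rcases Finset.mem_union.mp hmem with h | h
    · exact ((H (c+1) h c hc.2 (by omega)).2 rfl)
    · exact ((H c hc.1 (c+1) h (by omega)).1 rfl)
  -- the set E
  set E := insert a (insert b (A ∩ B)) with hE
  have haE : a ∉ insert b (A ∩ B) := by
    simp only [Finset.mem_insert, Finset.mem_inter]
    rintro (rfl | ⟨_, h⟩)
    · exact hbB.2 haA.1
    · exact haA.2 h
  have hbE : b ∉ A ∩ B := by
    rw [Finset.mem_inter]; rintro ⟨h, _⟩; exact hbB.2 h
  have hEcard : E.card = (A ∩ B).card + 2 := by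
    rw [hE, Finset.card_insert_of_notMem haE, Finset.card_insert_of_notMem hbE]
  have hEsucc : ∀ x ∈ E, x + 1 ∉ S := by
    intro x hx
    rcases Finset.mem_insert.mp hx with rfl | hx
    · exact succ_a
    rcases Finset.mem_insert.mp hx with rfl | hx
    · exact succ_b
    · exact succ_c x hx
  have hES : E ⊆ S := by
    intro x hx
    rcases Finset.mem_insert.mp hx with rfl | hx
    · exact Finset.mem_union_left _ haA.1
    rcases Finset.mem_insert.mp hx with rfl | hx
    · exact Finset.mem_union_right _ hbB.1
    · exact Finset.mem_union_left _ (Finset.mem_inter.mp hx).1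
  -- injection x ↦ x + 1 from E into range (2k+1) \ S
  have hinj : E.card ≤ ((Finset.range (2 * k + 1)) \ S).card := by
    apply Finset.card_le_card_of_injOn (fun x => x + 1)
    · intro x hx
      rw [Finset.mem_coe, Finset.mem_sdiff, Finset.mem_range]
      refine ⟨?_, hEsucc x hx⟩
      have := Finset.union_subset hA hB (hES hx)
      rw [Finset.mem_range] at this
      beta_reduce
      omega
    · intro x _ y _ h
      simpa using h
  rw [Finset.card_sdiff_of_subset hSsub, Finset.card_range] at hinj
  have hSle := Finset.card_le_card hSsub
  rw [Finset.card_range] at hSle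
  omega

theorem lc_path_odd (n : ℕ) (hn : 2 ≤ n) (ho : Odd n) :
    lcIs (SimpleGraph.pathGraph n) ((n - 1) / 2) := by
  obtain ⟨k, rfl⟩ := ho
  have hk : 1 ≤ k := by omega
  have hdiv : (2 * k + 1 - 1) / 2 = k := by omega
  rw [hdiv]
  constructor
  · refine ⟨by omega, ?_⟩
    intro A B hAe hBe cA cB hne
    -- map to index sets
    have hinjA : Set.InjOn idx A := fun e he f hf h =>
      idx_inj (hAe he) (hAe hf) h
    have hinjB : Set.InjOn idx B := fun e he f hf h =>
      idx_inj (hBe he) (hBe hf) h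
    set A' := A.image idx with hA'
    set B' := B.image idx with hB'
    have cA' : A'.card = k := by rw [hA', Finset.card_image_of_injOn hinjA, cA]
    have cB' : B'.card = k := by rw [hB', Finset.card_image_of_injOn hinjB, cB]
    have hsubA : A' ⊆ Finset.range (2 * k) := by
      intro i hi
      obtain ⟨e, he, rfl⟩ := Finset.mem_image.mp hi
      have := idx_lt (hAe he)
      rw [Finset.mem_range]; omega
    have hsubB : B' ⊆ Finset.range (2 * k) := by
      intro i hi
      obtain ⟨e, he, rfl⟩ := Finset.mem_image.mp hi
      have := idx_lt (hBe he)
      rw [Finset.mem_range]; omega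
    have hne' : A' ≠ B' := by
      intro h
      apply hne
      apply Finset.ext
      intro e
      constructor
      · intro he
        have : idx e ∈ B' := h ▸ Finset.mem_image_of_mem idx he
        obtain ⟨f, hf, hef⟩ := Finset.mem_image.mp this
        rwa [idx_inj (hBe hf) (hAe he) hef] at hf
      · intro he
        have : idx e ∈ A' := h ▸ Finset.mem_image_of_mem idx he
        obtain ⟨f, hf, hef⟩ := Finset.mem_image.mp this
        rwa [idx_inj (hAe hf) (hBe he) hef] at hf
    by_contra hcon
    push_neg at hcon
    apply key k A' B' hsubA hsubB cA' cB' hne'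
    intro i hi j hj hij
    obtain ⟨e, he, rfl⟩ := Finset.mem_image.mp hi
    obtain ⟨f, hf, rfl⟩ := Finset.mem_image.mp hj
    constructor
    · intro h
      have hef : e ≠ f := fun h' => hij (by rw [h'])
      exact hcon e he f hf hef (shareVertex_succ (hAe he) (hBe hf) h)
    · intro h
      have hef : e ≠ f := fun h' => hij (by rw [h'])
      obtain ⟨v, hv1, hv2⟩ := shareVertex_succ (hBe hf) (hAe he) h
      exact hcon e he f hf hef ⟨v, hv2, hv1⟩
  · -- lower bound
    rintro r ⟨hr, hslc⟩
    by_contra hlt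
    push_neg at hlt
    -- r < k; build counterexample
    have hn' : 2 ≤ 2 * k + 1 := by omega
    set ed : ℕ → Sym2 (Fin (2 * k + 1)) :=
      fun i => s(⟨min i (2 * k), by omega⟩, ⟨min (i + 1) (2 * k), by omega⟩) with hed
    have hed_mem : ∀ i, i + 1 ≤ 2 * k → ed i ∈ (pathGraph (2 * k + 1)).edgeSet := by
      intro i hi
      rw [hed, SimpleGraph.mem_edgeSet, pathGraph_adj]
      left
      simp only
      omega
    have hed_idx : ∀ i, i + 1 ≤ 2 * k → idx (ed i) = i := by
      intro i hi
      rw [hed, idx_mk]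
      simp only
      omega
    set A := (Finset.range r).image ed with hA
    set B := (Finset.Ico (2 * k - r) (2 * k)).image ed with hB
    have hAe : ↑A ⊆ (pathGraph (2 * k + 1)).edgeSet := by
      intro e he
      obtain ⟨i, hi, rfl⟩ := Finset.mem_image.mp he
      rw [Finset.mem_range] at hi
      exact hed_mem i (by omega)
    have hBe : ↑B ⊆ (pathGraph (2 * k + 1)).edgeSet := by
      intro e he
      obtain ⟨i, hi, rfl⟩ := Finset.mem_image.mp he
      rw [Finset.mem_Ico] at hi
      exact hed_mem i (by omega)
    have cA : A.card = r := by
      rw [hA, Finset.card_image_of_injOn, Finset.card_range]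
      intro i hi j hj h
      rw [Finset.coe_range, Set.mem_Iio] at hi hj
      have := hed_idx i (by omega)
      have := hed_idx j (by omega)
      rw [← this, ← hed_idx i (by omega), h]
    have cB : B.card = r := by
      rw [hB, Finset.card_image_of_injOn, Nat.card_Ico]
      · omega
      · intro i hi j hj h
        rw [Finset.coe_Ico, Set.mem_Ico] at hi hj
        have h1 := hed_idx i (by omega)
        have h2 := hed_idx j (by omega)
        rw [← h1, ← h2, h]
    have hne : A ≠ B := by
      intro h
      have h0 : ed 0 ∈ A := by
        rw [hA]
        exact Finset.mem_image_of_mem ed (Finset.mem_range.mpr hr)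
      rw [h, hB] at h0
      obtain ⟨j, hj, hje⟩ := Finset.mem_image.mp h0
      rw [Finset.mem_Ico] at hj
      have h1 := hed_idx j (by omega)
      have h2 := hed_idx 0 (by omega)
      rw [hje] at h1
      omega
    obtain ⟨e, he, f, hf, hef, hsv⟩ := hslc A B hAe hBe cA cB hne
    obtain ⟨i, hi, rfl⟩ := Finset.mem_image.mp he
    obtain ⟨j, hj, rfl⟩ := Finset.mem_image.mp hf
    rw [Finset.mem_range] at hi
    rw [Finset.mem_Ico] at hj
    have h1 := hed_idx i (by omega)
    have h2 := hed_idx j (by omega)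
    have := shareVertex_idx (hAe he) (hBe hf) hsv
    rw [h1, h2] at this
    omega
end

section
/- For a path graph P_n with n ≥ 2 vertices and n even, the line completion number of P_n equals n/2. -/
open SimpleGraph

/-! ### Auxiliary definitions and lemmas -/

open Fin.NatCast

/-- The index of an edge of the path graph: the minimum of the values of its endpoints. -/
def idxE {n : ℕ} (e : Sym2 (Fin n)) : ℕ :=
  Sym2.lift ⟨fun a b => min a.val b.val, fun _ _ => min_comm _ _⟩ e

/-- The `i`-th edge of the path graph. -/
def pedge (n : ℕ) [NeZero n] (i : ℕ) : Sym2 (Fin n) :=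
  s(((i : ℕ) : Fin n), ((i + 1 : ℕ) : Fin n))

section PathEdges

variable {n : ℕ} [NeZero n]

lemma idx_pedge (i : ℕ) (h : i + 1 < n) : idxE (pedge n i) = i := by
  simp only [pedge, idxE, Sym2.lift_mk]
  rw [Fin.val_cast_of_lt (by omega), Fin.val_cast_of_lt h]
  omega

lemma pedge_mem (i : ℕ) (h : i + 1 < n) : pedge n i ∈ (pathGraph n).edgeSet := by
  rw [pedge, SimpleGraph.mem_edgeSet, pathGraph_adj]
  left
  rw [Fin.val_cast_of_lt (by omega), Fin.val_cast_of_lt h]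

lemma edge_eq {e : Sym2 (Fin n)} (he : e ∈ (pathGraph n).edgeSet) :
    idxE e + 1 < n ∧ e = pedge n (idxE e) := by
  induction e using Sym2.ind with
  | _ u v =>
    rw [SimpleGraph.mem_edgeSet, pathGraph_adj] at he
    have hu := u.isLt
    have hv := v.isLt
    rcases he with h | h
    · have hidx : idxE s(u, v) = u.val := by
        simp only [idxE, Sym2.lift_mk]; omega
      rw [hidx]
      refine ⟨by omega, ?_⟩
      simp only [pedge]
      rw [h, Fin.cast_val_eq_self, Fin.cast_val_eq_self]
    · have hidx : idxE s(u, v) = v.val := by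
        simp only [idxE, Sym2.lift_mk]; omega
      rw [hidx]
      refine ⟨by omega, ?_⟩
      simp only [pedge]
      rw [h, Fin.cast_val_eq_self, Fin.cast_val_eq_self, Sym2.eq_swap]

lemma share_le {i j : ℕ} (hi : i + 1 < n) (hj : j + 1 < n)
    (h : shareVertex (pedge n i) (pedge n j)) : j ≤ i + 1 ∧ i ≤ j + 1 := by
  obtain ⟨v, hv1, hv2⟩ := h
  rw [pedge, Sym2.mem_iff] at hv1 hv2
  have e1 : ((i : ℕ) : Fin n).val = i := Fin.val_cast_of_lt (by omega)
  have e2 : ((i + 1 : ℕ) : Fin n).val = i + 1 := Fin.val_cast_of_lt hi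
  have e3 : ((j : ℕ) : Fin n).val = j := Fin.val_cast_of_lt (by omega)
  have e4 : ((j + 1 : ℕ) : Fin n).val = j + 1 := Fin.val_cast_of_lt hj
  rcases hv1 with h1 | h1 <;> rcases hv2 with h2 | h2 <;>
    · have := congrArg Fin.val h1
      have := congrArg Fin.val h2
      omega

lemma share_succ {i : ℕ} (_h : i + 2 < n) :
    shareVertex (pedge n i) (pedge n (i + 1)) :=
  ⟨((i + 1 : ℕ) : Fin n), by rw [pedge, Sym2.mem_iff]; right; rfl,
    by rw [pedge, Sym2.mem_iff]; left; rfl⟩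

end PathEdges

lemma sum_pairs (f : ℕ → ℕ) (k : ℕ) :
    ∑ j ∈ Finset.range (2 * k), f j = ∑ i ∈ Finset.range k, (f (2 * i) + f (2 * i + 1)) := by
  induction k with
  | zero => simp
  | succ k ih =>
      rw [show 2 * (k + 1) = (2 * k + 1) + 1 by ring, Finset.sum_range_succ,
        Finset.sum_range_succ, ih, Finset.sum_range_succ, add_assoc]

lemma key_lemma (m : ℕ) (hm : 1 ≤ m) (S T : Finset ℕ)
    (hS : S ⊆ Finset.range (2 * m - 1)) (hT : T ⊆ Finset.range (2 * m - 1))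
    (cS : S.card = m) (cT : T.card = m)
    (h1 : ∀ i ∈ S, i + 1 ∉ T) (h2 : ∀ i ∈ T, i + 1 ∉ S) : S = T := by
  set c : ℕ → ℕ := fun j => (if j ∈ S then 1 else 0) + (if j ∈ T then 1 else 0) with hc
  have csum : ∀ (U : Finset ℕ), U ⊆ Finset.range (2 * m - 1) →
      ∑ j ∈ Finset.range (2 * m - 1), (if j ∈ U then 1 else 0) = U.card := by
    intro U hU
    rw [Finset.sum_ite_mem, Finset.inter_eq_right.mpr hU]
    simp
  have total : ∑ j ∈ Finset.range (2 * m - 1), c j = 2 * m := by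
    simp only [hc, Finset.sum_add_distrib, csum S hS, csum T hT, cS, cT]
    ring
  have cle : ∀ j, c j ≤ 2 := by
    intro j; simp only [hc]; split_ifs <;> omega
  have hsplit : ∑ j ∈ Finset.range (2 * m - 1), c j
      = (∑ k ∈ Finset.range (m - 1), (c (2 * k) + c (2 * k + 1))) + c (2 * (m - 1)) := by
    rw [show 2 * m - 1 = 2 * (m - 1) + 1 by omega, Finset.sum_range_succ, sum_pairs]
  have pairBound : ∀ j : ℕ, c j + c (j + 1) ≤ 2 := by
    intro j
    simp only [hc]
    split_ifs with a b a' b' <;>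
      first
        | omega
        | exact absurd ‹j + 1 ∈ T› (h1 j ‹j ∈ S›)
        | exact absurd ‹j + 1 ∈ S› (h2 j ‹j ∈ T›)
  have hsum_pairs_le : (∑ k ∈ Finset.range (m - 1), (c (2 * k) + c (2 * k + 1))) ≤ 2 * (m - 1) := by
    calc (∑ k ∈ Finset.range (m - 1), (c (2 * k) + c (2 * k + 1)))
        ≤ ∑ _k ∈ Finset.range (m - 1), 2 := Finset.sum_le_sum (fun k _ => pairBound (2 * k))
      _ = 2 * (m - 1) := by rw [Finset.sum_const, Finset.card_range, smul_eq_mul]; omega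
  have clast : c (2 * (m - 1)) = 2 := by
    have := cle (2 * (m - 1))
    omega
  have hsum_pairs : (∑ k ∈ Finset.range (m - 1), (c (2 * k) + c (2 * k + 1))) = 2 * (m - 1) := by
    omega
  have pair_eq : ∀ k ∈ Finset.range (m - 1), c (2 * k) + c (2 * k + 1) = 2 := by
    by_contra hcon
    push_neg at hcon
    obtain ⟨k, hk, hkne⟩ := hcon
    have hlt : (∑ k ∈ Finset.range (m - 1), (c (2 * k) + c (2 * k + 1))) < 2 * (m - 1) := by
      calc (∑ k ∈ Finset.range (m - 1), (c (2 * k) + c (2 * k + 1)))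
          < ∑ _k ∈ Finset.range (m - 1), 2 :=
            Finset.sum_lt_sum (fun k _ => pairBound (2 * k))
              ⟨k, hk, lt_of_le_of_ne (pairBound (2 * k)) hkne⟩
        _ = 2 * (m - 1) := by rw [Finset.sum_const, Finset.card_range, smul_eq_mul]; omega
    omega
  have hc2 : ∀ x, c x = 2 → x ∈ S ∧ x ∈ T := by
    intro x hx
    simp only [hc] at hx
    by_cases a : x ∈ S <;> by_cases b : x ∈ T <;> simp [a, b] at hx ⊢
  have desc : ∀ d, d < m → c (2 * (m - 1) - 2 * d) = 2 := by
    intro d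
    induction d with
    | zero => intro _; simpa using clast
    | succ d ih =>
        intro hd
        have hprev := ih (by omega)
        have hmem := hc2 _ hprev
        have hj2 : (2 * (m - 1) - 2 * (d + 1)) + 2 = 2 * (m - 1) - 2 * d := by omega
        set j := 2 * (m - 1) - 2 * (d + 1) with hjdef
        rw [← hj2] at hmem
        have hs1 : j + 1 ∉ S := fun hs => h1 _ hs (by simpa using hmem.2)
        have ht1 : j + 1 ∉ T := fun ht => h2 _ ht (by simpa using hmem.1)
        have hcj1 : c (j + 1) = 0 := by simp [hc, hs1, ht1]
        have hkmem : m - 2 - d ∈ Finset.range (m - 1) := by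
          simp only [Finset.mem_range]; omega
        have hpk := pair_eq _ hkmem
        have e1 : 2 * (m - 2 - d) = j := by omega
        rw [e1] at hpk
        omega
  have evens_mem : ∀ k, k < m → 2 * k ∈ S ∧ 2 * k ∈ T := by
    intro k hk
    have := desc (m - 1 - k) (by omega)
    rw [show 2 * (m - 1) - 2 * (m - 1 - k) = 2 * k by omega] at this
    exact hc2 _ this
  set Ev : Finset ℕ := (Finset.range m).image (fun k => 2 * k) with hEv
  have cEv : Ev.card = m := by
    rw [hEv, Finset.card_image_of_injective _ (fun a b hab => by omega), Finset.card_range]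
  have hES : Ev ⊆ S := by
    intro x hx
    rw [hEv, Finset.mem_image] at hx
    obtain ⟨k, hk, rfl⟩ := hx
    exact (evens_mem k (Finset.mem_range.mp hk)).1
  have hET : Ev ⊆ T := by
    intro x hx
    rw [hEv, Finset.mem_image] at hx
    obtain ⟨k, hk, rfl⟩ := hx
    exact (evens_mem k (Finset.mem_range.mp hk)).2
  have eS : Ev = S := Finset.eq_of_subset_of_card_le hES (by omega)
  have eT : Ev = T := Finset.eq_of_subset_of_card_le hET (by omega)
  exact eS.symm.trans eT

theorem lc_path_even (n : ℕ) (hn : 2 ≤ n) (he : Even n) :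
    lcIs (SimpleGraph.pathGraph n) (n / 2) := by
  haveI : NeZero n := ⟨by omega⟩
  obtain ⟨t, ht⟩ := he
  constructor
  · refine ⟨by omega, ?_⟩
    intro A B hA hB cA cB hne
    by_contra hno
    push_neg at hno
    -- hno : ∀ e ∈ A, ∀ f ∈ B, e ≠ f → ¬shareVertex e f
    have edgeA : ∀ a ∈ A, idxE a + 1 < n ∧ a = pedge n (idxE a) :=
      fun a ha => edge_eq (hA (Finset.mem_coe.mpr ha))
    have edgeB : ∀ b ∈ B, idxE b + 1 < n ∧ b = pedge n (idxE b) :=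
      fun b hb => edge_eq (hB (Finset.mem_coe.mpr hb))
    have injA : Set.InjOn idxE (A : Set (Sym2 (Fin n))) := by
      intro a ha b hb hab
      rw [(edgeA a ha).2, (edgeA b hb).2, hab]
    have injB : Set.InjOn idxE (B : Set (Sym2 (Fin n))) := by
      intro a ha b hb hab
      rw [(edgeB a ha).2, (edgeB b hb).2, hab]
    set S := A.image idxE with hSdef
    set T := B.image idxE with hTdef
    have cS : S.card = n / 2 := by rw [hSdef, Finset.card_image_of_injOn injA, cA]
    have cT : T.card = n / 2 := by rw [hTdef, Finset.card_image_of_injOn injB, cB]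
    have hS : S ⊆ Finset.range (2 * (n / 2) - 1) := by
      intro i hi
      obtain ⟨a, ha, rfl⟩ := Finset.mem_image.mp hi
      have := (edgeA a ha).1
      rw [Finset.mem_range]
      omega
    have hT : T ⊆ Finset.range (2 * (n / 2) - 1) := by
      intro i hi
      obtain ⟨b, hb, rfl⟩ := Finset.mem_image.mp hi
      have := (edgeB b hb).1
      rw [Finset.mem_range]
      omega
    have hcross : ∀ (a : Sym2 (Fin n)), a ∈ A → ∀ b ∈ B, idxE b = idxE a + 1 → False := by
      intro a ha b hb hba
      have ea := edgeA a ha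
      have eb := edgeB b hb
      have hne' : a ≠ b := by
        intro h
        rw [h] at hba
        omega
      apply hno a ha b hb hne'
      rw [ea.2, eb.2, hba]
      exact share_succ (by omega)
    have hcross' : ∀ (b : Sym2 (Fin n)), b ∈ B → ∀ a ∈ A, idxE a = idxE b + 1 → False := by
      intro b hb a ha hab
      have ea := edgeA a ha
      have eb := edgeB b hb
      have hne' : a ≠ b := by
        intro h
        rw [h] at hab
        omega
      apply hno a ha b hb hne'
      rw [ea.2, eb.2, hab]
      obtain ⟨v, hv1, hv2⟩ := share_succ (n := n) (i := idxE b) (by omega)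
      exact ⟨v, hv2, hv1⟩
    have h1 : ∀ i ∈ S, i + 1 ∉ T := by
      intro i hi hcon
      obtain ⟨a, ha, rfl⟩ := Finset.mem_image.mp hi
      obtain ⟨b, hb, hbi⟩ := Finset.mem_image.mp hcon
      exact hcross a ha b hb hbi
    have h2 : ∀ i ∈ T, i + 1 ∉ S := by
      intro i hi hcon
      obtain ⟨b, hb, rfl⟩ := Finset.mem_image.mp hi
      obtain ⟨a, ha, hai⟩ := Finset.mem_image.mp hcon
      exact hcross' b hb a ha hai
    have hST : S = T := key_lemma (n / 2) (by omega) S T hS hT cS cT h1 h2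
    apply hne
    have hsub : A ⊆ B := by
      intro a ha
      have hmem : idxE a ∈ T := by
        rw [← hST, hSdef]
        exact Finset.mem_image_of_mem _ ha
      obtain ⟨b, hb, hba⟩ := Finset.mem_image.mp hmem
      have : a = b := by
        rw [(edgeA a ha).2, (edgeB b hb).2, hba]
      rwa [this]
    exact Finset.eq_of_subset_of_card_le hsub (by omega)
  · intro r hr
    obtain ⟨hr0, hslc⟩ := hr
    by_contra hcon
    push_neg at hcon
    -- hcon : r < n / 2
    set A : Finset (Sym2 (Fin n)) := (Finset.range r).image (pedge n) with hAdef
    set B : Finset (Sym2 (Fin n)) := (Finset.Ico (n - 1 - r) (n - 1)).image (pedge n) with hBdef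
    have hA : ↑A ⊆ (pathGraph n).edgeSet := by
      intro e he
      obtain ⟨i, hi, rfl⟩ := Finset.mem_image.mp (Finset.mem_coe.mp he)
      rw [Finset.mem_range] at hi
      exact pedge_mem i (by omega)
    have hB : ↑B ⊆ (pathGraph n).edgeSet := by
      intro e he
      obtain ⟨i, hi, rfl⟩ := Finset.mem_image.mp (Finset.mem_coe.mp he)
      rw [Finset.mem_Ico] at hi
      exact pedge_mem i (by omega)
    have cA : A.card = r := by
      rw [hAdef, Finset.card_image_of_injOn, Finset.card_range]
      intro a ha b hb hab
      rw [Finset.coe_range, Set.mem_Iio] at ha hb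
      have := idx_pedge (n := n) a (by omega)
      have := idx_pedge (n := n) b (by omega)
      rw [← this, ← ‹idxE (pedge n a) = a›, hab]
    have cB : B.card = r := by
      rw [hBdef, Finset.card_image_of_injOn, Nat.card_Ico]
      · omega
      · intro a ha b hb hab
        rw [Finset.coe_Ico, Set.mem_Ico] at ha hb
        have := idx_pedge (n := n) a (by omega)
        have := idx_pedge (n := n) b (by omega)
        rw [← this, ← ‹idxE (pedge n a) = a›, hab]
    have hne : A ≠ B := by
      intro h
      have h0 : pedge n 0 ∈ A := by
        rw [hAdef]
        exact Finset.mem_image_of_mem _ (Finset.mem_range.mpr hr0)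
      rw [h, hBdef] at h0
      obtain ⟨j, hj, hj0⟩ := Finset.mem_image.mp h0
      rw [Finset.mem_Ico] at hj
      have hij : idxE (pedge n j) = j := idx_pedge (n := n) j (by omega)
      have hi0 : idxE (pedge n 0) = 0 := idx_pedge (n := n) 0 (by omega)
      rw [hj0, hi0] at hij
      omega
    obtain ⟨e, heA, f, hfB, hnef, hshare⟩ := hslc A B hA hB cA cB hne
    obtain ⟨i, hi, rfl⟩ := Finset.mem_image.mp heA
    obtain ⟨j, hj, rfl⟩ := Finset.mem_image.mp hfB
    rw [Finset.mem_range] at hi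
    rw [Finset.mem_Ico] at hj
    have := share_le (n := n) (i := i) (j := j) (by omega) (by omega) hshare
    omega
end

section
/- Let n and m both be even with n, m ≥ 2 and m ≤ n. Then the line completion number of the grid graph P_n × P_m equals mn + 1 − (m+n)/2 − m/2. -/
open SimpleGraph

lemma small_box (m n z p s : ℤ) (hm : 2 ≤ m) (hmn : m ≤ n) (hz : 0 ≤ z)
    (hz5 : z ≤ 2*m + n - 5) (hp : 1 ≤ p) (hs : 1 ≤ s) (hps : p + s ≤ m - 1)
    (hB : 2*m*n - 2*m - n - z + 2 ≤ (2*p - 1)*(2*s - 1)) : False := by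
  have h1 : (2*p - 1)*(2*s - 1) ≤ (p + s - 1)^2 := by nlinarith [sq_nonneg (p - s)]
  have h2 : (p + s - 1)^2 ≤ (m - 2)^2 := by
    nlinarith [mul_nonneg (by linarith : (0:ℤ) ≤ m - 1 - p - s + (p + s - 1))
      (by linarith : (0:ℤ) ≤ m - 2 - (p + s - 1))]
  have h3 : (m - 2)^2 < 2*m*n - 2*m - n - z + 2 := by
    nlinarith [mul_nonneg (by linarith : (0:ℤ) ≤ n - m) (by linarith : (0:ℤ) ≤ m),
      mul_nonneg (by linarith : (0:ℤ) ≤ m - 2) (by linarith : (0:ℤ) ≤ n)]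
  linarith

set_option maxHeartbeats 2000000 in
lemma crux (m n z x y p s p' s' : ℤ) (hm : 2 ≤ m) (hmn : m ≤ n) (hz : 0 ≤ z)
    (hxyz : x + y + z = m*n)
    (hp1 : 1 ≤ p) (hpm : p ≤ m) (hp'1 : 1 ≤ p') (hp'm : p' ≤ m)
    (hs1 : 1 ≤ s) (hsn : s ≤ n) (hs'1 : 1 ≤ s') (hs'n : s' ≤ n)
    (hx : x ≤ p*s) (hy : y ≤ p'*s')
    (hA1 : 2*p + 2*s + (2*m*n - 2*m - n - z + 1) ≤ 4*x)
    (hA2 : 2*p' + 2*s' + (2*m*n - 2*m - n - z + 1) ≤ 4*y)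
    (hF7 : m + 1 ≤ p + p' → n + 1 ≤ s + s' →
      x + y ≤ p*s + p'*s' - (p + p' - m)*(s + s' - n)) : False := by
  have hPER : p + s + p' + s' ≤ 2*m + n - z - 1 := by linarith
  have hz5 : z ≤ 2*m + n - 5 := by linarith
  have hB1 : 2*m*n - 2*m - n - z + 2 ≤ (2*p - 1)*(2*s - 1) := by
    have e : (2*p - 1)*(2*s - 1) = 4*(p*s) - 2*p - 2*s + 1 := by ring
    linarith
  have hB2 : 2*m*n - 2*m - n - z + 2 ≤ (2*p' - 1)*(2*s' - 1) := by
    have e : (2*p' - 1)*(2*s' - 1) = 4*(p'*s') - 2*p' - 2*s' + 1 := by ring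
    linarith
  rcases le_or_gt (p + p') m with hII | hI1
  · -- CASE II : p + p' ≤ m
    have hy2 : y ≤ (m - p)*s' := by
      have : p'*s' ≤ (m - p)*s' := by
        apply mul_le_mul_of_nonneg_right (by linarith) (by linarith)
      linarith
    have hx2 : x ≤ (m - p')*s := by
      have : p*s ≤ (m - p')*s := by
        apply mul_le_mul_of_nonneg_right (by linarith) (by linarith)
      linarith
    have hC3 : p*(n - s) + (m - p)*(n - s') ≤ z := by
      have e : p*(n - s) + (m - p)*(n - s') = m*n - p*s - (m - p)*s' := by ring
      linarith
    have hC3s : p'*(n - s') + (m - p')*(n - s) ≤ z := by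
      have e : p'*(n - s') + (m - p')*(n - s) = m*n - p'*s' - (m - p')*s := by ring
      linarith
    rcases le_or_gt (n - s) 0 with hβ | hβ
    · rcases le_or_gt (n - s') 0 with hβ' | hβ'
      · -- II.0 : s = n, s' = n
        have hsn' : s = n := by linarith
        have hs'n' : s' = n := by linarith
        have hxp : x ≤ p*n := by rw [hsn'] at hx; linarith
        have hyp : y ≤ p'*n := by rw [hs'n'] at hy; linarith
        have e1 : n*(p + p') = p*n + p'*n := by ring
        have h1 : x + y ≤ n*(p + p') := by linarith
        have h2 : p + p' ≤ 2*m - n - z - 1 := by linarith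
        have h3 : n*(p + p') ≤ n*(2*m - n - z - 1) :=
          mul_le_mul_of_nonneg_left h2 (by linarith)
        nlinarith [mul_nonneg hz (by linarith : (0:ℤ) ≤ n - 1),
          mul_nonneg (by linarith : (0:ℤ) ≤ n - m) (by linarith : (0:ℤ) ≤ n)]
      · -- II.b' : s = n, n - s' ≥ 1
        have hmp : m - p ≤ z := by
          have h1 : (m - p)*1 ≤ (m - p)*(n - s') := by
            apply mul_le_mul_of_nonneg_left (by linarith) (by linarith)
          have h2 : 0 ≤ p*(n - s) := by
            apply mul_nonneg (by linarith) (by linarith)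
          linarith
        have : p' + s' ≤ m - 1 := by linarith
        exact small_box m n z p' s' hm hmn hz hz5 hp'1 hs'1 this hB2
    · rcases le_or_gt (n - s') 0 with hβ' | hβ'
      · -- II.b : n - s ≥ 1, s' = n
        have hmp' : m - p' ≤ z := by
          have h1 : (m - p')*1 ≤ (m - p')*(n - s) := by
            apply mul_le_mul_of_nonneg_left (by linarith) (by linarith)
          have h2 : 0 ≤ p'*(n - s') := by
            apply mul_nonneg (by linarith) (by linarith)
          linarith
        have : p + s ≤ m - 1 := by linarith
        exact small_box m n z p s hm hmn hz hz5 hp1 hs1 this hB1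
      · -- II.c : both β ≥ 1
        have h1 : p + (n - s) - 1 ≤ p*(n - s) := by
          nlinarith [mul_nonneg (by linarith : (0:ℤ) ≤ p - 1) (by linarith : (0:ℤ) ≤ n - s - 1)]
        have h2 : (m - p) + (n - s') - 1 ≤ (m - p)*(n - s') := by
          nlinarith [mul_nonneg (by linarith : (0:ℤ) ≤ m - p - 1) (by linarith : (0:ℤ) ≤ n - s' - 1)]
        linarith
  rcases le_or_gt (s + s') n with hIII | hI2
  · -- CASE III : s + s' ≤ n
    have hy2 : y ≤ p'*(n - s) := by
      have : p'*s' ≤ p'*(n - s) := by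
        apply mul_le_mul_of_nonneg_left (by linarith) (by linarith)
      linarith
    have hx2 : x ≤ p*(n - s') := by
      have : p*s ≤ p*(n - s') := by
        apply mul_le_mul_of_nonneg_left (by linarith) (by linarith)
      linarith
    have hD3 : (m - p)*s + (m - p')*(n - s) ≤ z := by
      have e : (m - p)*s + (m - p')*(n - s) = m*n - p*s - p'*(n - s) := by ring
      linarith
    have hD3s : (m - p')*s' + (m - p)*(n - s') ≤ z := by
      have e : (m - p')*s' + (m - p)*(n - s') = m*n - p'*s' - p*(n - s') := by ring
      linarith
    rcases le_or_gt (m - p) 0 with hα | hα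
    · rcases le_or_gt (m - p') 0 with hα' | hα'
      · -- III.a : p = p' = m
        have hpm' : p = m := by linarith
        have hp'm' : p' = m := by linarith
        have hxp : x ≤ m*s := by rw [hpm'] at hx; linarith
        have hyp : y ≤ m*s' := by rw [hp'm'] at hy; linarith
        have e1 : m*(s + s') = m*s + m*s' := by ring
        have h1 : x + y ≤ m*(s + s') := by linarith
        have h2 : s + s' ≤ n - z - 1 := by linarith
        have h3 : m*(s + s') ≤ m*(n - z - 1) :=
          mul_le_mul_of_nonneg_left h2 (by linarith)
        nlinarith [mul_nonneg hz (by linarith : (0:ℤ) ≤ m - 1)]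
      · -- III.b' : p = m, m - p' ≥ 1
        have hpeq : p = m := le_antisymm hpm (by linarith)
        have hns : n - s ≤ z := by
          have h1 : 1*(n - s) ≤ (m - p')*(n - s) :=
            mul_le_mul_of_nonneg_right (by linarith) (by linarith)
          have h2 : (m - p)*s = 0 := by rw [hpeq]; ring
          linarith
        have : p' + s' ≤ m - 1 := by linarith
        exact small_box m n z p' s' hm hmn hz hz5 hp'1 hs'1 this hB2
    · rcases le_or_gt (m - p') 0 with hα' | hα'
      · -- III.b : m - p ≥ 1, p' = m
        have hp'eq : p' = m := le_antisymm hp'm (by linarith)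
        have hns' : n - s' ≤ z := by
          have h1 : 1*(n - s') ≤ (m - p)*(n - s') :=
            mul_le_mul_of_nonneg_right (by linarith) (by linarith)
          have h2 : (m - p')*s' = 0 := by rw [hp'eq]; ring
          linarith
        have : p + s ≤ m - 1 := by linarith
        exact small_box m n z p s hm hmn hz hz5 hp1 hs1 this hB1
      · -- III.c : both α ≥ 1
        have hns1 : 1 ≤ n - s := by linarith
        have h1 : (m - p) + s - 1 ≤ (m - p)*s := by
          nlinarith [mul_nonneg (by linarith : (0:ℤ) ≤ m - p - 1) (by linarith : (0:ℤ) ≤ s - 1)]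
        have h2 : (m - p') + (n - s) - 1 ≤ (m - p')*(n - s) := by
          nlinarith [mul_nonneg (by linarith : (0:ℤ) ≤ m - p' - 1) (by linarith : (0:ℤ) ≤ n - s - 1)]
        linarith
  · -- CASE I
    have hOVL := hF7 (by linarith) (by linarith)
    have hovl2 : (m - p)*(n - s') + (m - p')*(n - s) ≤ z := by
      have e : p*s + p'*s' - (p + p' - m)*(s + s' - n)
          = m*n - ((m - p)*(n - s') + (m - p')*(n - s)) := by ring
      linarith
    have hPERI : (m - p) + (m - p') + (n - s) + (n - s') ≥ n + z + 1 := by linarith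
    have haa : (m - p) + (m - p') ≤ m - 1 := by linarith
    have hbb : (n - s) + (n - s') ≤ n - 1 := by linarith
    set a := m - p with ha_def
    set a' := m - p' with ha'_def
    set b := n - s with hb_def
    set b' := n - s' with hb'_def
    have ha0 : 0 ≤ a := by linarith
    have ha'0 : 0 ≤ a' := by linarith
    have hb0 : 0 ≤ b := by linarith
    have hb'0 : 0 ≤ b' := by linarith
    rcases le_or_gt 1 a with ha1 | ha1
    · rcases le_or_gt 1 b' with hb'1 | hb'1
      · -- a ≥ 1, b' ≥ 1
        have hab' : a + b' - 1 ≤ a*b' := by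
          nlinarith [mul_nonneg (by linarith : (0:ℤ) ≤ a - 1) (by linarith : (0:ℤ) ≤ b' - 1)]
        rcases le_or_gt 1 a' with ha'1 | ha'1
        · rcases le_or_gt 1 b with hb1 | hb1
          · have ha'b : a' + b - 1 ≤ a'*b := by
              nlinarith [mul_nonneg (by linarith : (0:ℤ) ≤ a' - 1) (by linarith : (0:ℤ) ≤ b - 1)]
            linarith
          · -- b = 0
            have hb00 : b = 0 := by linarith
            have : 0 ≤ a'*b := by rw [hb00]; simp
            linarith
        · -- a' = 0
          have ha'00 : a' = 0 := by linarith
          have : 0 ≤ a'*b := by rw [ha'00]; simp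
          linarith
      · -- b' = 0
        have hb'00 : b' = 0 := by linarith
        rcases le_or_gt 1 a' with ha'1 | ha'1
        · rcases le_or_gt 1 b with hb1 | hb1
          · have ha'b : a' + b - 1 ≤ a'*b := by
              nlinarith [mul_nonneg (by linarith : (0:ℤ) ≤ a' - 1) (by linarith : (0:ℤ) ≤ b - 1)]
            have : 0 ≤ a*b' := by rw [hb'00]; simp
            linarith
          · -- b = 0 : a + a' ≥ n+z+1 but ≤ m-1
            linarith
        · -- a' = 0 : a + b ≥ n+z+1, small_box on (p,s)
          have : p + s ≤ m - 1 := by linarith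
          exact small_box m n z p s hm hmn hz hz5 hp1 hs1 this hB1
    · -- a = 0
      have ha00 : a = 0 := by linarith
      rcases le_or_gt 1 a' with ha'1 | ha'1
      · rcases le_or_gt 1 b with hb1 | hb1
        · have ha'b : a' + b - 1 ≤ a'*b := by
            nlinarith [mul_nonneg (by linarith : (0:ℤ) ≤ a' - 1) (by linarith : (0:ℤ) ≤ b - 1)]
          have : 0 ≤ a*b' := by rw [ha00]; simp
          linarith
        · -- b = 0 : a' + b' ≥ n+z+1, small_box on (p',s')
          have : p' + s' ≤ m - 1 := by linarith
          exact small_box m n z p' s' hm hmn hz hz5 hp'1 hs'1 this hB2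
      · -- a = 0, a' = 0
        linarith

variable {n m : ℕ}

def supp (S : Finset (Sym2 (Fin n × Fin m))) : Finset (Fin n × Fin m) :=
  Finset.univ.filter (fun v => ∃ e ∈ S, v ∈ e)

lemma mem_supp {S : Finset (Sym2 (Fin n × Fin m))} {v : Fin n × Fin m} :
    v ∈ supp S ↔ ∃ e ∈ S, v ∈ e := by simp [supp]

def Hor (e : Sym2 (Fin n × Fin m)) : Prop :=
  ∃ u v : Fin n × Fin m, e = s(u, v) ∧ u.2 = v.2 ∧ (u.1 : ℕ) + 1 = (v.1 : ℕ)

def Ver (e : Sym2 (Fin n × Fin m)) : Prop :=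
  ∃ u v : Fin n × Fin m, e = s(u, v) ∧ u.1 = v.1 ∧ (u.2 : ℕ) + 1 = (v.2 : ℕ)

instance : DecidablePred (Hor (n := n) (m := m)) := fun _ => by
  unfold Hor; infer_instance

instance : DecidablePred (Ver (n := n) (m := m)) := fun _ => by
  unfold Ver; infer_instance

lemma grid_adj_cases {u v : Fin n × Fin m} (h : (gridGraph n m).Adj u v) :
    (u.2 = v.2 ∧ ((u.1 : ℕ) + 1 = (v.1 : ℕ) ∨ (v.1 : ℕ) + 1 = (u.1 : ℕ))) ∨
    (u.1 = v.1 ∧ ((u.2 : ℕ) + 1 = (v.2 : ℕ) ∨ (v.2 : ℕ) + 1 = (u.2 : ℕ))) := by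
  rw [gridGraph, boxProd_adj] at h
  rcases h with ⟨h1, h2⟩ | ⟨h1, h2⟩
  · exact Or.inl ⟨h2, pathGraph_adj.mp h1⟩
  · exact Or.inr ⟨h2, pathGraph_adj.mp h1⟩

lemma hor_or_ver {e : Sym2 (Fin n × Fin m)} (he : e ∈ (gridGraph n m).edgeSet) :
    Hor e ∨ Ver e := by
  induction e with
  | _ u v =>
    rw [mem_edgeSet] at he
    rcases grid_adj_cases he with ⟨h1, h2 | h2⟩ | ⟨h1, h2 | h2⟩
    · exact Or.inl ⟨u, v, rfl, h1, h2⟩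
    · exact Or.inl ⟨v, u, Sym2.eq_swap, h1.symm, h2⟩
    · exact Or.inr ⟨u, v, rfl, h1, h2⟩
    · exact Or.inr ⟨v, u, Sym2.eq_swap, h1.symm, h2⟩

noncomputable def lpt (e : Sym2 (Fin n × Fin m)) : Fin n × Fin m :=
  if h : Hor e then h.choose else e.out.1

noncomputable def bpt (e : Sym2 (Fin n × Fin m)) : Fin n × Fin m :=
  if h : Ver e then h.choose else e.out.1

lemma lpt_spec {e : Sym2 (Fin n × Fin m)} (hh : Hor e) :
    ∃ u v, lpt e = u ∧ e = s(u, v) ∧ u.2 = v.2 ∧ (u.1 : ℕ) + 1 = (v.1 : ℕ) := by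
  have h : ∃ v, e = s(lpt e, v) ∧ (lpt e).2 = v.2 ∧ ((lpt e).1 : ℕ) + 1 = (v.1 : ℕ) := by
    unfold lpt; rw [dif_pos hh]; exact hh.choose_spec
  obtain ⟨v, h1, h2, h3⟩ := h
  exact ⟨lpt e, v, rfl, h1, h2, h3⟩

lemma bpt_spec {e : Sym2 (Fin n × Fin m)} (hh : Ver e) :
    ∃ u v, bpt e = u ∧ e = s(u, v) ∧ u.1 = v.1 ∧ (u.2 : ℕ) + 1 = (v.2 : ℕ) := by
  have h : ∃ v, e = s(bpt e, v) ∧ (bpt e).1 = v.1 ∧ ((bpt e).2 : ℕ) + 1 = (v.2 : ℕ) := by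
    unfold bpt; rw [dif_pos hh]; exact hh.choose_spec
  obtain ⟨v, h1, h2, h3⟩ := h
  exact ⟨bpt e, v, rfl, h1, h2, h3⟩

def rowMax (X : Finset (Fin n × Fin m)) : Finset (Fin n × Fin m) :=
  X.filter (fun v => ∀ w ∈ X, w.2 = v.2 → w.1 ≤ v.1)

def colMax (X : Finset (Fin n × Fin m)) : Finset (Fin n × Fin m) :=
  X.filter (fun v => ∀ w ∈ X, w.1 = v.1 → w.2 ≤ v.2)

lemma rowMax_card (X : Finset (Fin n × Fin m)) :
    (rowMax X).card = (X.image Prod.snd).card := by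
  apply Finset.card_bij (fun v _ => v.2)
  · intro a ha; exact Finset.mem_image_of_mem _ (Finset.mem_filter.1 ha).1
  · intro a ha b hb hab
    rcases Finset.mem_filter.1 ha with ⟨haX, hamax⟩
    rcases Finset.mem_filter.1 hb with ⟨hbX, hbmax⟩
    have h1 : a.1 ≤ b.1 := hbmax a haX hab
    have h2 : b.1 ≤ a.1 := hamax b hbX hab.symm
    exact Prod.ext (le_antisymm h1 h2) hab
  · intro j hj
    obtain ⟨v, hv, rfl⟩ := Finset.mem_image.1 hj
    obtain ⟨w, hw, hmax⟩ := Finset.exists_max_image (X.filter (fun u => u.2 = v.2))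
      Prod.fst ⟨v, Finset.mem_filter.2 ⟨hv, rfl⟩⟩
    rcases Finset.mem_filter.1 hw with ⟨hwX, hw2⟩
    refine ⟨w, Finset.mem_filter.2 ⟨hwX, fun u hu hu2 => ?_⟩, hw2⟩
    exact hmax u (Finset.mem_filter.2 ⟨hu, by rw [hu2, hw2]⟩)

lemma colMax_card (X : Finset (Fin n × Fin m)) :
    (colMax X).card = (X.image Prod.fst).card := by
  apply Finset.card_bij (fun v _ => v.1)
  · intro a ha; exact Finset.mem_image_of_mem _ (Finset.mem_filter.1 ha).1
  · intro a ha b hb hab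
    rcases Finset.mem_filter.1 ha with ⟨haX, hamax⟩
    rcases Finset.mem_filter.1 hb with ⟨hbX, hbmax⟩
    have h1 : a.2 ≤ b.2 := hbmax a haX hab
    have h2 : b.2 ≤ a.2 := hamax b hbX hab.symm
    exact Prod.ext hab (le_antisymm h1 h2)
  · intro j hj
    obtain ⟨v, hv, rfl⟩ := Finset.mem_image.1 hj
    obtain ⟨w, hw, hmax⟩ := Finset.exists_max_image (X.filter (fun u => u.1 = v.1))
      Prod.snd ⟨v, Finset.mem_filter.2 ⟨hv, rfl⟩⟩
    rcases Finset.mem_filter.1 hw with ⟨hwX, hw2⟩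
    refine ⟨w, Finset.mem_filter.2 ⟨hwX, fun u hu hu2 => ?_⟩, hw2⟩
    exact hmax u (Finset.mem_filter.2 ⟨hu, by rw [hu2, hw2]⟩)

lemma hor_count (C : Finset (Sym2 (Fin n × Fin m))) :
    (C.filter Hor).card + ((supp C).image Prod.snd).card ≤ (supp C).card := by
  have hMsub : rowMax (supp C) ⊆ supp C := Finset.filter_subset _ _
  have key : (C.filter Hor).card ≤ ((supp C) \ rowMax (supp C)).card := by
    apply Finset.card_le_card_of_injOn lpt
    · intro e he
      rcases Finset.mem_filter.1 he with ⟨heC, hhor⟩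
      obtain ⟨u, v, hu, hev, h2, h3⟩ := lpt_spec hhor
      rw [hu]
      have hl : u ∈ supp C :=
        mem_supp.2 ⟨e, heC, by rw [hev]; exact Sym2.mem_mk_left _ _⟩
      have hv : v ∈ supp C :=
        mem_supp.2 ⟨e, heC, by rw [hev]; exact Sym2.mem_mk_right _ _⟩
      rw [Finset.mem_coe, Finset.mem_sdiff]
      refine ⟨hl, fun hmem => ?_⟩
      have := (Finset.mem_filter.1 hmem).2 v hv h2.symm
      rw [Fin.le_def] at this
      omega
    · intro e he f hf heq
      rcases Finset.mem_filter.1 he with ⟨_, hhe⟩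
      rcases Finset.mem_filter.1 hf with ⟨_, hhf⟩
      obtain ⟨u, v, hu, hev, h2, h3⟩ := lpt_spec hhe
      obtain ⟨u', w, hu', hfw, h2', h3'⟩ := lpt_spec hhf
      have huu : u = u' := by rw [← hu, ← hu', heq]
      subst huu
      have hvw : v = w := by
        apply Prod.ext
        · apply Fin.ext; omega
        · rw [← h2, ← h2']
      rw [hev, hfw, hvw]
  have hcard : ((supp C) \ rowMax (supp C)).card = (supp C).card - (rowMax (supp C)).card :=
    Finset.card_sdiff_of_subset hMsub
  have hle : (rowMax (supp C)).card ≤ (supp C).card := Finset.card_le_card hMsub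
  rw [hcard, rowMax_card] at key
  rw [rowMax_card] at hle
  omega

lemma ver_count (C : Finset (Sym2 (Fin n × Fin m))) :
    (C.filter Ver).card + ((supp C).image Prod.fst).card ≤ (supp C).card := by
  have hMsub : colMax (supp C) ⊆ supp C := Finset.filter_subset _ _
  have key : (C.filter Ver).card ≤ ((supp C) \ colMax (supp C)).card := by
    apply Finset.card_le_card_of_injOn bpt
    · intro e he
      rcases Finset.mem_filter.1 he with ⟨heC, hver⟩
      obtain ⟨u, v, hu, hev, h2, h3⟩ := bpt_spec hver
      rw [hu]
      have hl : u ∈ supp C :=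
        mem_supp.2 ⟨e, heC, by rw [hev]; exact Sym2.mem_mk_left _ _⟩
      have hv : v ∈ supp C :=
        mem_supp.2 ⟨e, heC, by rw [hev]; exact Sym2.mem_mk_right _ _⟩
      rw [Finset.mem_coe, Finset.mem_sdiff]
      refine ⟨hl, fun hmem => ?_⟩
      have := (Finset.mem_filter.1 hmem).2 v hv h2.symm
      rw [Fin.le_def] at this
      omega
    · intro e he f hf heq
      rcases Finset.mem_filter.1 he with ⟨_, hhe⟩
      rcases Finset.mem_filter.1 hf with ⟨_, hhf⟩
      obtain ⟨u, v, hu, hev, h2, h3⟩ := bpt_spec hhe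
      obtain ⟨u', w, hu', hfw, h2', h3'⟩ := bpt_spec hhf
      have huu : u = u' := by rw [← hu, ← hu', heq]
      subst huu
      have hvw : v = w := by
        apply Prod.ext
        · rw [← h2, ← h2']
        · apply Fin.ext; omega
      rw [hev, hfw, hvw]
  have hcard : ((supp C) \ colMax (supp C)).card = (supp C).card - (colMax (supp C)).card :=
    Finset.card_sdiff_of_subset hMsub
  have hle : (colMax (supp C)).card ≤ (supp C).card := Finset.card_le_card hMsub
  rw [hcard, colMax_card] at key
  rw [colMax_card] at hle
  omega

lemma cardC_bound (C : Finset (Sym2 (Fin n × Fin m)))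
    (hC : ∀ e ∈ C, e ∈ (gridGraph n m).edgeSet) :
    C.card + ((supp C).image Prod.fst).card + ((supp C).image Prod.snd).card
      ≤ 2 * (supp C).card := by
  have hsplit := Finset.card_filter_add_card_filter_not
    (s := C) (p := Hor)
  have hver : (C.filter (fun e => ¬ Hor e)) ⊆ C.filter Ver := by
    intro e he
    rcases Finset.mem_filter.1 he with ⟨heC, hne⟩
    exact Finset.mem_filter.2 ⟨heC, (hor_or_ver (hC e heC)).resolve_left hne⟩
  have h1 := hor_count C
  have h2 := ver_count C
  have h3 : (C.filter (fun e => ¬ Hor e)).card ≤ (C.filter Ver).card :=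
    Finset.card_le_card hver
  omega

lemma supp_matching_card (I : Finset (Sym2 (Fin n × Fin m)))
    (hnd : ∀ e ∈ I, ¬ e.IsDiag)
    (hdisj : ∀ e ∈ I, ∀ f ∈ I, e ≠ f → ∀ v : Fin n × Fin m, v ∈ e → v ∈ f → False) :
    (supp I).card = 2 * I.card := by
  have hrw : supp I = I.biUnion (fun e => Finset.univ.filter (· ∈ e)) := by
    ext v; simp [mem_supp]
  rw [hrw, Finset.card_biUnion]
  · rw [Finset.sum_congr rfl (g := fun _ => 2), Finset.sum_const, smul_eq_mul, mul_comm]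
    intro e he
    induction e with
    | _ u v =>
      have hne : u ≠ v := by
        intro h
        exact hnd _ he (by rw [h]; exact Sym2.isDiag_iff_proj_eq.2 rfl)
      have hset : Finset.univ.filter (· ∈ s(u,v)) = {u, v} := by
        ext w; simp [Sym2.mem_iff]
      rw [hset, Finset.card_insert_of_notMem (by simp [hne]), Finset.card_singleton]
  · intro e he f hf hne
    rw [Function.onFun, Finset.disjoint_left]
    intro v hv hv'
    exact hdisj e he f hf hne v (Finset.mem_filter.1 hv).2 (Finset.mem_filter.1 hv').2

lemma three_disjoint_card (X Y S : Finset (Fin n × Fin m))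
    (hXY : Disjoint X Y) (hXS : Disjoint X S) (hYS : Disjoint Y S) :
    X.card + Y.card + S.card ≤ n * m := by
  have h1 : (X ∪ Y ∪ S).card = X.card + Y.card + S.card := by
    rw [Finset.card_union_of_disjoint, Finset.card_union_of_disjoint hXY]
    rw [Finset.disjoint_union_left]
    exact ⟨hXS, hYS⟩
  calc X.card + Y.card + S.card = (X ∪ Y ∪ S).card := h1.symm
    _ ≤ Fintype.card (Fin n × Fin m) := Finset.card_le_univ _
    _ = n * m := by simp

lemma rect_overlap (X Y : Finset (Fin n × Fin m)) (hd : Disjoint X Y) :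
    X.card + Y.card
      + (X.image Prod.fst ∩ Y.image Prod.fst).card * (X.image Prod.snd ∩ Y.image Prod.snd).card
    ≤ (X.image Prod.fst).card * (X.image Prod.snd).card
      + (Y.image Prod.fst).card * (Y.image Prod.snd).card := by
  set P1 := (X.image Prod.fst) ×ˢ (X.image Prod.snd) with hP1
  set P2 := (Y.image Prod.fst) ×ˢ (Y.image Prod.snd) with hP2
  have h1 : X ∪ Y ⊆ P1 ∪ P2 :=
    Finset.union_subset_union Finset.subset_product Finset.subset_product
  have h2 : (X ∪ Y).card = X.card + Y.card := Finset.card_union_of_disjoint hd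
  have h3 : P1 ∩ P2
      = (X.image Prod.fst ∩ Y.image Prod.fst) ×ˢ (X.image Prod.snd ∩ Y.image Prod.snd) := by
    ext w
    simp only [hP1, hP2, Finset.mem_inter, Finset.mem_product]
    tauto
  have h4 := Finset.card_union_add_card_inter P1 P2
  have h5 : (X ∪ Y).card ≤ (P1 ∪ P2).card := Finset.card_le_card h1
  rw [h3] at h4
  rw [Finset.card_product, Finset.card_product, Finset.card_product] at h4
  omega

set_option maxHeartbeats 1000000 in
lemma upper_core (hm2 : 2 ≤ m) (hmn : m ≤ n)
    (C D I : Finset (Sym2 (Fin n × Fin m)))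
    (hCE : ∀ e ∈ C, e ∈ (gridGraph n m).edgeSet)
    (hDE : ∀ e ∈ D, e ∈ (gridGraph n m).edgeSet)
    (hIE : ∀ e ∈ I, e ∈ (gridGraph n m).edgeSet)
    (hCne : C.Nonempty) (hDne : D.Nonempty) (hcard : C.card = D.card)
    (hCD : ∀ e ∈ C, ∀ f ∈ D, ∀ v : Fin n × Fin m, v ∈ e → v ∈ f → False)
    (hCI : ∀ e ∈ C, ∀ f ∈ I, ∀ v : Fin n × Fin m, v ∈ e → v ∈ f → False)
    (hDI : ∀ e ∈ D, ∀ f ∈ I, ∀ v : Fin n × Fin m, v ∈ e → v ∈ f → False)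
    (hII : ∀ e ∈ I, ∀ f ∈ I, e ≠ f → ∀ v : Fin n × Fin m, v ∈ e → v ∈ f → False) :
    2 * C.card + 2 * I.card + 2 * m + n ≤ 2 * (m * n) := by
  classical
  set X := supp C with hX
  set Y := supp D with hY
  set S := supp I with hS
  -- disjointness of supports
  have hXY : Disjoint X Y := by
    rw [Finset.disjoint_left]
    intro v hv hv'
    obtain ⟨e, he, hve⟩ := mem_supp.1 hv
    obtain ⟨f, hf, hvf⟩ := mem_supp.1 hv'
    exact hCD e he f hf v hve hvf
  have hXS : Disjoint X S := by
    rw [Finset.disjoint_left]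
    intro v hv hv'
    obtain ⟨e, he, hve⟩ := mem_supp.1 hv
    obtain ⟨f, hf, hvf⟩ := mem_supp.1 hv'
    exact hCI e he f hf v hve hvf
  have hYS : Disjoint Y S := by
    rw [Finset.disjoint_left]
    intro v hv hv'
    obtain ⟨e, he, hve⟩ := mem_supp.1 hv
    obtain ⟨f, hf, hvf⟩ := mem_supp.1 hv'
    exact hDI e he f hf v hve hvf
  have hInd : ∀ e ∈ I, ¬ e.IsDiag := fun e he =>
    (gridGraph n m).not_isDiag_of_mem_edgeSet (hIE e he)
  have hSI : S.card = 2 * I.card := supp_matching_card I hInd hII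
  have N3 : X.card + Y.card + 2 * I.card ≤ n * m := by
    have := three_disjoint_card X Y S hXY hXS hYS
    omega
  have N1 := cardC_bound C hCE
  have N2 := cardC_bound D hDE
  have hXne : X.Nonempty := by
    obtain ⟨e, he⟩ := hCne
    exact ⟨e.out.1, mem_supp.2 ⟨e, he, Sym2.out_fst_mem e⟩⟩
  have hYne : Y.Nonempty := by
    obtain ⟨e, he⟩ := hDne
    exact ⟨e.out.1, mem_supp.2 ⟨e, he, Sym2.out_fst_mem e⟩⟩
  set sX := (X.image Prod.fst).card with hsX
  set pX := (X.image Prod.snd).card with hpX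
  set sY := (Y.image Prod.fst).card with hsY
  set pY := (Y.image Prod.snd).card with hpY
  have hsX1 : 1 ≤ sX := Finset.card_pos.2 (hXne.image _)
  have hpX1 : 1 ≤ pX := Finset.card_pos.2 (hXne.image _)
  have hsY1 : 1 ≤ sY := Finset.card_pos.2 (hYne.image _)
  have hpY1 : 1 ≤ pY := Finset.card_pos.2 (hYne.image _)
  have hsXn : sX ≤ n := le_trans (Finset.card_le_univ _) (by simp)
  have hsYn : sY ≤ n := le_trans (Finset.card_le_univ _) (by simp)
  have hpXm : pX ≤ m := le_trans (Finset.card_le_univ _) (by simp)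
  have hpYm : pY ≤ m := le_trans (Finset.card_le_univ _) (by simp)
  have N4 : X.card ≤ sX * pX := by
    calc X.card ≤ ((X.image Prod.fst) ×ˢ (X.image Prod.snd)).card :=
          Finset.card_le_card Finset.subset_product
      _ = sX * pX := Finset.card_product _ _
  have N5 : Y.card ≤ sY * pY := by
    calc Y.card ≤ ((Y.image Prod.fst) ×ˢ (Y.image Prod.snd)).card :=
          Finset.card_le_card Finset.subset_product
      _ = sY * pY := Finset.card_product _ _
  have N7 := rect_overlap X Y hXY
  have hICU := Finset.card_inter_add_card_union (X.image Prod.fst) (Y.image Prod.fst)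
  have hIPU := Finset.card_inter_add_card_union (X.image Prod.snd) (Y.image Prod.snd)
  have hCUn : (X.image Prod.fst ∪ Y.image Prod.fst).card ≤ n :=
    le_trans (Finset.card_le_univ _) (by simp)
  have hPUm : (X.image Prod.snd ∪ Y.image Prod.snd).card ≤ m :=
    le_trans (Finset.card_le_univ _) (by simp)
  -- now the by_contra and crux
  by_contra hcon
  push_neg at hcon
  have hq : 2 * (m*n) + 1 ≤ 2 * C.card + 2 * I.card + 2*m + n := hcon
  have zN3 : (X.card:ℤ) + (Y.card:ℤ) + 2*(I.card:ℤ) ≤ (n:ℤ)*(m:ℤ) := by exact_mod_cast N3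
  have hmncomm : (n:ℤ)*(m:ℤ) = (m:ℤ)*(n:ℤ) := mul_comm _ _
  have hzi : 2*(I.card:ℤ) ≤ (m:ℤ)*(n:ℤ) - (X.card:ℤ) - (Y.card:ℤ) := by linarith
  have hzq : (0:ℤ) ≤ (m:ℤ)*(n:ℤ) - (X.card:ℤ) - (Y.card:ℤ) := by
    have : (0:ℤ) ≤ 2*(I.card:ℤ) := by positivity
    linarith
  have hqz : 2 * ((m:ℤ)*(n:ℤ)) + 1 ≤ 2 * (C.card:ℤ) + 2 * (I.card:ℤ) + 2*(m:ℤ) + (n:ℤ) := by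
    exact_mod_cast hq
  have hcD : (D.card : ℤ) = (C.card : ℤ) := by exact_mod_cast hcard.symm
  have hQ : 2*(m:ℤ)*(n:ℤ) - 2*(m:ℤ) - (n:ℤ) - ((m:ℤ)*(n:ℤ) - (X.card:ℤ) - (Y.card:ℤ)) + 1
      ≤ 2 * (C.card : ℤ) := by linarith
  have zN1 : (C.card : ℤ) + (sX:ℤ) + (pX:ℤ) ≤ 2 * (X.card:ℤ) := by exact_mod_cast N1
  have zN2 : (C.card : ℤ) + (sY:ℤ) + (pY:ℤ) ≤ 2 * (Y.card:ℤ) := by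
    have h : (D.card : ℤ) + (sY:ℤ) + (pY:ℤ) ≤ 2 * (Y.card:ℤ) := by exact_mod_cast N2
    linarith
  refine crux (m:ℤ) (n:ℤ) ((m:ℤ)*(n:ℤ) - (X.card:ℤ) - (Y.card:ℤ))
    (X.card:ℤ) (Y.card:ℤ) (pX:ℤ) (sX:ℤ) (pY:ℤ) (sY:ℤ)
    (by exact_mod_cast hm2) (by exact_mod_cast hmn) hzq (by ring)
    (by exact_mod_cast hpX1) (by exact_mod_cast hpXm)
    (by exact_mod_cast hpY1) (by exact_mod_cast hpYm)
    (by exact_mod_cast hsX1) (by exact_mod_cast hsXn)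
    (by exact_mod_cast hsY1) (by exact_mod_cast hsYn)
    (by rw [mul_comm]; exact_mod_cast N4) (by rw [mul_comm]; exact_mod_cast N5)
    (by linarith) (by linarith) ?_
  intro hu hw
  have hic : (sX : ℤ) + (sY:ℤ) - (n:ℤ) ≤ ((X.image Prod.fst ∩ Y.image Prod.fst).card : ℤ) := by
    have h : ((X.image Prod.fst ∪ Y.image Prod.fst).card : ℤ) ≤ (n:ℤ) := by exact_mod_cast hCUn
    have h2 : ((X.image Prod.fst ∩ Y.image Prod.fst).card : ℤ)
        + ((X.image Prod.fst ∪ Y.image Prod.fst).card : ℤ) = (sX : ℤ) + (sY:ℤ) := by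
      exact_mod_cast hICU
    linarith
  have hip : (pX : ℤ) + (pY:ℤ) - (m:ℤ) ≤ ((X.image Prod.snd ∩ Y.image Prod.snd).card : ℤ) := by
    have h : ((X.image Prod.snd ∪ Y.image Prod.snd).card : ℤ) ≤ (m:ℤ) := by exact_mod_cast hPUm
    have h2 : ((X.image Prod.snd ∩ Y.image Prod.snd).card : ℤ)
        + ((X.image Prod.snd ∪ Y.image Prod.snd).card : ℤ) = (pX : ℤ) + (pY:ℤ) := by
      exact_mod_cast hIPU
    linarith
  have hprod : ((sX:ℤ) + (sY:ℤ) - (n:ℤ)) * ((pX:ℤ) + (pY:ℤ) - (m:ℤ))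
      ≤ ((X.image Prod.fst ∩ Y.image Prod.fst).card : ℤ)
        * ((X.image Prod.snd ∩ Y.image Prod.snd).card : ℤ) := by
    apply mul_le_mul hic hip (by linarith) (by positivity)
  have zN7 : (X.card:ℤ) + (Y.card:ℤ) + ((X.image Prod.fst ∩ Y.image Prod.fst).card : ℤ)
        * ((X.image Prod.snd ∩ Y.image Prod.snd).card : ℤ)
      ≤ (sX:ℤ) * (pX:ℤ) + (sY:ℤ) * (pY:ℤ) := by exact_mod_cast N7
  have e1 : ((pX:ℤ) + (pY:ℤ) - (m:ℤ)) * ((sX:ℤ) + (sY:ℤ) - (n:ℤ))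
      = ((sX:ℤ) + (sY:ℤ) - (n:ℤ)) * ((pX:ℤ) + (pY:ℤ) - (m:ℤ)) := mul_comm _ _
  have e2 : (pX:ℤ) * (sX:ℤ) = (sX:ℤ) * (pX:ℤ) := mul_comm _ _
  have e3 : (pY:ℤ) * (sY:ℤ) = (sY:ℤ) * (pY:ℤ) := mul_comm _ _
  linarith [hprod, zN7]

lemma no_bad_pair (hm2 : 2 ≤ m) (hmn : m ≤ n) (A B : Finset (Sym2 (Fin n × Fin m)))
    (hA : ∀ e ∈ A, e ∈ (gridGraph n m).edgeSet)
    (hB : ∀ e ∈ B, e ∈ (gridGraph n m).edgeSet)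
    (hAB : A.card = B.card) (hne : A ≠ B)
    (hbad : ∀ e ∈ A, ∀ f ∈ B, e ≠ f → ¬ ∃ v, v ∈ e ∧ v ∈ f) :
    2 * A.card + 2 * m + n ≤ 2 * (m * n) := by
  classical
  have hCcard := Finset.card_sdiff_add_card_inter A B
  have hDcard := Finset.card_sdiff_add_card_inter B A
  have hBA : B ∩ A = A ∩ B := Finset.inter_comm _ _
  rw [hBA] at hDcard
  have hCDcard : (A \ B).card = (B \ A).card := by omega
  have hCne : (A \ B).Nonempty := by
    rw [Finset.nonempty_iff_ne_empty]
    intro h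
    exact hne (Finset.eq_of_subset_of_card_le (Finset.sdiff_eq_empty_iff_subset.1 h)
      (le_of_eq hAB.symm))
  have hDne : (B \ A).Nonempty := by
    rw [Finset.nonempty_iff_ne_empty]
    intro h
    exact hne (Finset.eq_of_subset_of_card_le (Finset.sdiff_eq_empty_iff_subset.1 h)
      (le_of_eq hAB)).symm
  have key := upper_core hm2 hmn (A \ B) (B \ A) (A ∩ B)
    (fun e he => hA e (Finset.mem_sdiff.1 he).1)
    (fun e he => hB e (Finset.mem_sdiff.1 he).1)
    (fun e he => hA e (Finset.mem_inter.1 he).1)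
    hCne hDne hCDcard
    (fun e he f hf v hve hvf => by
      rcases Finset.mem_sdiff.1 he with ⟨heA, heB⟩
      rcases Finset.mem_sdiff.1 hf with ⟨hfB, _⟩
      exact hbad e heA f hfB (fun h => heB (h ▸ hfB)) ⟨v, hve, hvf⟩)
    (fun e he f hf v hve hvf => by
      rcases Finset.mem_sdiff.1 he with ⟨heA, heB⟩
      rcases Finset.mem_inter.1 hf with ⟨_, hfB⟩
      exact hbad e heA f hfB (fun h => heB (h ▸ hfB)) ⟨v, hve, hvf⟩)
    (fun e he f hf v hve hvf => by
      rcases Finset.mem_sdiff.1 he with ⟨heB, heA⟩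
      rcases Finset.mem_inter.1 hf with ⟨hfA, _⟩
      exact hbad f hfA e heB (fun h => heA (h ▸ hfA)) ⟨v, hvf, hve⟩)
    (fun e he f hf hnef v hve hvf => by
      rcases Finset.mem_inter.1 he with ⟨heA, _⟩
      rcases Finset.mem_inter.1 hf with ⟨_, hfB⟩
      exact hbad e heA f hfB hnef ⟨v, hve, hvf⟩)
  omega




lemma half_edges (hm1 : 1 ≤ m) (c0 c1 : ℕ) (hc01 : c0 < c1) (hc1 : c1 ≤ n) :
    ∃ E : Finset (Sym2 (Fin n × Fin m)),
      (∀ e ∈ E, e ∈ (gridGraph n m).edgeSet) ∧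
      (∀ e ∈ E, ∀ v : Fin n × Fin m, v ∈ e → c0 ≤ (v.1 : ℕ) ∧ (v.1 : ℕ) < c1) ∧
      E.card = (c1 - c0 - 1) * m + (c1 - c0) * (m - 1) := by
  classical
  set w := c1 - c0 with hw
  have hn0 : 0 < n := by omega
  let fH : Fin (w - 1) × Fin m → Sym2 (Fin n × Fin m) := fun ij =>
    s(((⟨c0 + ij.1.val, by have := ij.1.isLt; omega⟩ : Fin n), ij.2),
      ((⟨c0 + ij.1.val + 1, by have := ij.1.isLt; omega⟩ : Fin n), ij.2))
  let fV : Fin w × Fin (m - 1) → Sym2 (Fin n × Fin m) := fun ij =>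
    s(((⟨c0 + ij.1.val, by have := ij.1.isLt; omega⟩ : Fin n),
        (⟨ij.2.val, by have := ij.2.isLt; omega⟩ : Fin m)),
      ((⟨c0 + ij.1.val, by have := ij.1.isLt; omega⟩ : Fin n),
        (⟨ij.2.val + 1, by have := ij.2.isLt; omega⟩ : Fin m)))
  have hfH_inj : Function.Injective fH := by
    intro a b h
    simp only [fH, Sym2.eq_iff, Prod.mk.injEq, Fin.mk.injEq] at h
    rcases h with ⟨⟨h1, h2⟩, _⟩ | ⟨⟨h1, _⟩, ⟨h3, _⟩⟩
    · exact Prod.ext (Fin.ext (by omega)) h2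
    · omega
  have hfV_inj : Function.Injective fV := by
    intro a b h
    simp only [fV, Sym2.eq_iff, Prod.mk.injEq, Fin.mk.injEq] at h
    rcases h with ⟨⟨h1, h2⟩, _⟩ | ⟨⟨h1, h2⟩, ⟨h3, h4⟩⟩
    · exact Prod.ext (Fin.ext (by omega)) (Fin.ext (by omega))
    · exact Prod.ext (Fin.ext (by omega)) (Fin.ext (by omega))
  refine ⟨(Finset.univ.image fH) ∪ (Finset.univ.image fV), ?_, ?_, ?_⟩
  · intro e he
    rcases Finset.mem_union.1 he with he | he <;> obtain ⟨ij, _, rfl⟩ := Finset.mem_image.1 he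
    · rw [mem_edgeSet, gridGraph, boxProd_adj]
      left
      refine ⟨pathGraph_adj.2 (Or.inl ?_), rfl⟩
      simp
    · rw [mem_edgeSet, gridGraph, boxProd_adj]
      right
      refine ⟨pathGraph_adj.2 (Or.inl ?_), rfl⟩
      simp
  · intro e he v hv
    rcases Finset.mem_union.1 he with he | he <;> obtain ⟨ij, _, rfl⟩ := Finset.mem_image.1 he
    · rcases Sym2.mem_iff.1 hv with rfl | rfl
      · simp only []
        have := ij.1.isLt; omega
      · simp only []
        have := ij.1.isLt; omega
    · rcases Sym2.mem_iff.1 hv with rfl | rfl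
      · simp only []
        have := ij.1.isLt; omega
      · simp only []
        have := ij.1.isLt; omega
  · have hdisj : Disjoint (Finset.univ.image fH) (Finset.univ.image fV) := by
      rw [Finset.disjoint_left]
      intro e heH heV
      obtain ⟨ij, _, h1⟩ := Finset.mem_image.1 heH
      obtain ⟨kl, _, h2⟩ := Finset.mem_image.1 heV
      rw [← h2] at h1
      simp only [fH, fV, Sym2.eq_iff, Prod.mk.injEq, Fin.mk.injEq] at h1
      rcases h1 with ⟨⟨_, h2⟩, ⟨_, h4⟩⟩ | ⟨⟨_, h2⟩, ⟨_, h4⟩⟩ <;>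
        · have e2 : (ij.2 : ℕ) = _ := congrArg Fin.val h2
          have e4 : (ij.2 : ℕ) = _ := congrArg Fin.val h4
          simp at e2 e4
          omega
    rw [Finset.card_union_of_disjoint hdisj, Finset.card_image_of_injective _ hfH_inj,
      Finset.card_image_of_injective _ hfV_inj]
    simp [mul_comm]


lemma lower_core (hm2 : 2 ≤ m) (b : ℕ) (hb : n = b + b) (hb1 : 1 ≤ b)
    (r : ℕ) (hr1 : 0 < r) (hr : r ≤ (b - 1) * m + b * (m - 1)) :
    ∃ A B : Finset (Sym2 (Fin n × Fin m)),
      (∀ e ∈ A, e ∈ (gridGraph n m).edgeSet) ∧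
      (∀ e ∈ B, e ∈ (gridGraph n m).edgeSet) ∧
      A.card = r ∧ B.card = r ∧ A ≠ B ∧
      (∀ e ∈ A, ∀ f ∈ B, ¬ shareVertex e f) := by
  obtain ⟨E1, hE1e, hE1v, hE1c⟩ := half_edges (n := n) (m := m) (by omega) 0 b (by omega) (by omega)
  obtain ⟨E2, hE2e, hE2v, hE2c⟩ := half_edges (n := n) (m := m) (by omega) b (b + b) (by omega) (by omega)
  have hE1c' : E1.card = (b - 1) * m + b * (m - 1) := by
    rw [hE1c]
    have e1 : b - 0 - 1 = b - 1 := by omega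
    have e2 : b - 0 = b := by omega
    rw [e1, e2]
  have hE2c' : E2.card = (b - 1) * m + b * (m - 1) := by
    rw [hE2c]
    have e1 : b + b - b - 1 = b - 1 := by omega
    have e2 : b + b - b = b := by omega
    rw [e1, e2]
  obtain ⟨A, hAsub, hAc⟩ := Finset.exists_subset_card_eq (s := E1) (n := r)
    (by rw [hE1c']; exact hr)
  obtain ⟨B, hBsub, hBc⟩ := Finset.exists_subset_card_eq (s := E2) (n := r)
    (by rw [hE2c']; exact hr)
  have hnoshare : ∀ e ∈ A, ∀ f ∈ B, ¬ shareVertex e f := by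
    intro e he f hf hsh
    obtain ⟨v, hv1, hv2⟩ := hsh
    have h1 := hE1v e (hAsub he) v hv1
    have h2 := hE2v f (hBsub hf) v hv2
    omega
  refine ⟨A, B, fun e he => hE1e e (hAsub he), fun e he => hE2e e (hBsub he),
    hAc, hBc, ?_, hnoshare⟩
  intro h
  obtain ⟨e, he⟩ := Finset.card_pos.1 (by omega : 0 < A.card)
  have hv := Sym2.out_fst_mem e
  have h1 := hE1v e (hAsub he) e.out.1 hv
  have h2 := hE2v e (hBsub (h ▸ he)) e.out.1 hv
  omega

set_option maxHeartbeats 1000000 in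
theorem lc_grid_even_even_le (n m : ℕ) (hn : 2 ≤ n) (hm : 2 ≤ m)
    (hne : Even n) (hme : Even m) (hmn : m ≤ n) :
    lcIs (gridGraph n m) (m * n + 1 - (m + n) / 2 - m / 2) := by
  classical
  obtain ⟨a, ha⟩ := hme
  obtain ⟨b, hb⟩ := hne
  have ha1 : 1 ≤ a := by omega
  have hb1 : 1 ≤ b := by omega
  have hP1 : a ≤ a * b := Nat.le_mul_of_pos_right a (by omega)
  have hP2 : b ≤ a * b := Nat.le_mul_of_pos_left b (by omega)
  have hmn4 : m * n = 4 * (a * b) := by rw [ha, hb]; ring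
  have hdiv1 : (m + n) / 2 = a + b := by omega
  have hdiv2 : m / 2 = a := by omega
  have hbm : b * m = 2 * (a * b) := by rw [ha]; ring
  have hkval : m * n + 1 - (m + n) / 2 - m / 2 = (b - 1) * m + b * (m - 1) + 1 := by
    rw [hmn4, hdiv1, hdiv2]
    have e1 : (b - 1) * m + m = b * m := by
      have hbb : b - 1 + 1 = b := by omega
      calc (b - 1) * m + m = (b - 1 + 1) * m := by ring
        _ = b * m := by rw [hbb]
    have e2 : b * (m - 1) + b = b * m := by
      have hmm : m - 1 + 1 = m := by omega
      calc b * (m - 1) + b = b * (m - 1 + 1) := by rw [Nat.mul_succ]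
        _ = b * m := by rw [hmm]
    omega
  constructor
  · refine ⟨by rw [hkval]; omega, ?_⟩
    intro A B hA hB hcA hcB hne'
    by_contra hcon
    push_neg at hcon
    have key := no_bad_pair hm hmn A B
      (fun e he => hA (Finset.mem_coe.2 he)) (fun e he => hB (Finset.mem_coe.2 he))
      (hcA.trans hcB.symm) hne'
      (fun e he f hf hnef hex => hcon e he f hf hnef hex)
    rw [hcA] at key
    rw [hmn4, hdiv1, hdiv2] at key
    omega
  · rintro r ⟨hr0, hslc⟩
    by_contra hlt
    push_neg at hlt
    have hrle : r ≤ (b - 1) * m + b * (m - 1) := by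
      rw [hkval] at hlt; omega
    obtain ⟨A, B, hAe, hBe, hAc, hBc, hABne, hnoshare⟩ :=
      lower_core hm b hb hb1 r hr0 hrle
    obtain ⟨e, he, f, hf, hnef, hsh⟩ := hslc A B
      (fun e he => hAe e (Finset.mem_coe.1 he)) (fun e he => hBe e (Finset.mem_coe.1 he))
      hAc hBc hABne
    exact hnoshare e he f hf hsh
end

section
/- Let n and m both be even with n, m ≥ 2. Then lc(P_n × P_m) = mn + 1 − (m+n)/2 − min(m,n)/2. -/
open SimpleGraph

set_option maxHeartbeats 1600000

open Finset

namespace GridAux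


private lemma smallside (n m x y : ℤ) (hn : 2 ≤ n) (hnm : n ≤ m)
    (hx : 1 ≤ x) (hy : 1 ≤ y) (hxy : x + y ≤ n - 1)
    (hR : m*n + 2*x + 2*y + 3 - m - 2*n ≤ 3*(x*y)) : False := by
  have h1 : (0:ℤ) ≤ (x-y)^2 := sq_nonneg _
  have h2 : (0:ℤ) ≤ (n-1-x-y)*(n-1+x+y) := by
    apply mul_nonneg <;> linarith
  have h3 : (0:ℤ) ≤ (m-n)*(n-1) := by apply mul_nonneg <;> linarith
  have h4 : (0:ℤ) ≤ (n-3)^2 := sq_nonneg _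
  nlinarith [h1, h2, h3, h4]

lemma arith (n m a b c d p q : ℕ) (hn : 2 ≤ n) (hnm : n ≤ m)
    (ha1 : 1 ≤ a) (han : a ≤ n) (hb1 : 1 ≤ b) (hbm : b ≤ m)
    (hc1 : 1 ≤ c) (hcn : c ≤ n) (hd1 : 1 ≤ d) (hdm : d ≤ m)
    (hp : 2 ≤ p) (hq : 2 ≤ q) (hpab : p ≤ a*b) (hqcd : q ≤ c*d)
    (hC1 : p + q + (a + c - n) * (b + d - m) ≤ a*b + c*d) :
    (p + q + m + n + n ≤ m*n + (a+b+c+d)) ∨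
    (3*p + m + n + n ≤ m*n + q + 2*a + 2*b) ∨
    (3*q + m + n + n ≤ m*n + p + 2*c + 2*d) := by
  by_contra hcon
  push_neg at hcon
  obtain ⟨h1, h2, h3⟩ := hcon
  have H1 : (m:ℤ)*n + (a+b+c+d) + 1 ≤ p + q + m + n + n := by exact_mod_cast h1
  have H2 : (m:ℤ)*n + q + 2*a + 2*b + 1 ≤ 3*p + m + n + n := by exact_mod_cast h2
  have H3 : (m:ℤ)*n + p + 2*c + 2*d + 1 ≤ 3*q + m + n + n := by exact_mod_cast h3
  have Hpab : (p:ℤ) ≤ (a:ℤ)*b := by exact_mod_cast hpab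
  have Hqcd : (q:ℤ) ≤ (c:ℤ)*d := by exact_mod_cast hqcd
  have Hp : (2:ℤ) ≤ p := by exact_mod_cast hp
  have Hq : (2:ℤ) ≤ q := by exact_mod_cast hq
  have Hn : (2:ℤ) ≤ n := by exact_mod_cast hn
  have Hnm : (n:ℤ) ≤ m := by exact_mod_cast hnm
  have Ha1 : (1:ℤ) ≤ a := by exact_mod_cast ha1
  have Han : (a:ℤ) ≤ n := by exact_mod_cast han
  have Hb1 : (1:ℤ) ≤ b := by exact_mod_cast hb1
  have Hbm : (b:ℤ) ≤ m := by exact_mod_cast hbm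
  have Hc1 : (1:ℤ) ≤ c := by exact_mod_cast hc1
  have Hcn : (c:ℤ) ≤ n := by exact_mod_cast hcn
  have Hd1 : (1:ℤ) ≤ d := by exact_mod_cast hd1
  have Hdm : (d:ℤ) ≤ m := by exact_mod_cast hdm
  clear h1 h2 h3 hpab hqcd hp hq hn ha1 han hb1 hbm hc1 hcn hd1 hdm
  rcases le_or_gt (a+c) n with hac | hac <;> rcases le_or_gt (b+d) m with hbd | hbd
  · -- Case A : a+c ≤ n, b+d ≤ m
    have hz : a + c - n = 0 := by omega
    rw [hz, Nat.zero_mul, Nat.add_zero] at hC1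
    have HC : (p:ℤ) + q ≤ (a:ℤ)*b + (c:ℤ)*d := by exact_mod_cast hC1
    have Hac : (a:ℤ) + c ≤ n := by exact_mod_cast hac
    have Hbd : (b:ℤ) + d ≤ m := by exact_mod_cast hbd
    have P1 : (0:ℤ) ≤ ((a:ℤ)-1)*((d:ℤ)-1) := by apply mul_nonneg <;> linarith
    have P2 : (0:ℤ) ≤ ((c:ℤ)-1)*((b:ℤ)-1) := by apply mul_nonneg <;> linarith
    have P3 : (0:ℤ) ≤ ((n:ℤ)-a-c)*((b:ℤ)+d-2) := by apply mul_nonneg <;> linarith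
    have P4 : (0:ℤ) ≤ ((n:ℤ)-2)*((m:ℤ)-b-d) := by apply mul_nonneg <;> linarith
    linarith [P1, P2, P3, P4, H1, HC]
  · -- Case B' : a+c ≤ n, b+d > m
    have hz : a + c - n = 0 := by omega
    rw [hz, Nat.zero_mul, Nat.add_zero] at hC1
    have HC : (p:ℤ) + q ≤ (a:ℤ)*b + (c:ℤ)*d := by exact_mod_cast hC1
    have Hbd : (m:ℤ) + 1 ≤ (b:ℤ) + d := by exact_mod_cast hbd
    have Hac : (a:ℤ) + c ≤ n := by exact_mod_cast hac
    have hK : (m:ℤ)*n + ((a:ℤ)+b+c+d) + 1 - m - 2*n ≤ (a:ℤ)*b + (c:ℤ)*d := by linarith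
    have hacn : (a:ℤ) + c = n := by
      by_contra h'
      have h'' : (a:ℤ) + c ≤ n - 1 := by
        rcases lt_or_ge ((a:ℤ)+c) n with h | h
        · linarith
        · exact absurd (le_antisymm Hac h) h'
      have P1 : (0:ℤ) ≤ ((m:ℤ)-b)*(a:ℤ) := by apply mul_nonneg <;> linarith
      have P2 : (0:ℤ) ≤ ((m:ℤ)-d)*(c:ℤ) := by apply mul_nonneg <;> linarith
      have P3 : (0:ℤ) ≤ ((m:ℤ)-1)*((n:ℤ)-1-a-c) := by apply mul_nonneg <;> linarith
      linarith [P1, P2, P3, hK]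
    have hcd : (c:ℤ)*d = (n:ℤ)*d - (a:ℤ)*d := by
      have : (c:ℤ) = n - a := by linarith
      rw [this]; ring
    have K1 : ((n:ℤ)-1)*((m:ℤ)-d) + ((b:ℤ)+1-n) ≤ (a:ℤ)*((b:ℤ)-d) := by
      linarith [hK, hcd, hacn]
    have hab' : (a:ℤ)*b = (n:ℤ)*b - (c:ℤ)*b := by
      have : (a:ℤ) = n - c := by linarith
      rw [this]; ring
    have K2 : ((n:ℤ)-1)*((m:ℤ)-b) + ((d:ℤ)+1-n) ≤ (c:ℤ)*((d:ℤ)-b) := by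
      linarith [hK, hab', hacn]
    rcases le_or_gt b d with hbd2 | hbd2
    · have Hbd2 : (b:ℤ) ≤ d := by exact_mod_cast hbd2
      have hda : (0:ℤ) ≤ (a:ℤ)*((d:ℤ)-b) := by apply mul_nonneg <;> linarith
      have hdm' : (d:ℤ) = m := by
        by_contra h'
        have h'' : (d:ℤ) ≤ m - 1 := by
          rcases lt_or_ge (d:ℤ) m with h | h
          · linarith
          · exact absurd (le_antisymm Hdm h) h'
        have P1 : (0:ℤ) ≤ ((n:ℤ)-1)*((m:ℤ)-1-d) := by apply mul_nonneg <;> linarith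
        linarith [P1, K1, hda]
      have hads : (a:ℤ)*d = (a:ℤ)*m := by rw [hdm']
      have hnds : (n:ℤ)*d = (n:ℤ)*m := by rw [hdm']
      have P1 : (0:ℤ) ≤ ((a:ℤ)-1)*((m:ℤ)-b) := by apply mul_nonneg <;> linarith
      linarith [K1, hads, P1, hnds]
    · have Hbd2 : (d:ℤ) ≤ b := by exact_mod_cast hbd2.le
      have hda : (0:ℤ) ≤ (c:ℤ)*((b:ℤ)-d) := by apply mul_nonneg <;> linarith
      have hbm' : (b:ℤ) = m := by
        by_contra h'
        have h'' : (b:ℤ) ≤ m - 1 := by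
          rcases lt_or_ge (b:ℤ) m with h | h
          · linarith
          · exact absurd (le_antisymm Hbm h) h'
        have P1 : (0:ℤ) ≤ ((n:ℤ)-1)*((m:ℤ)-1-b) := by apply mul_nonneg <;> linarith
        linarith [P1, K2, hda]
      have hcbs : (c:ℤ)*b = (c:ℤ)*m := by rw [hbm']
      have hnbs : (n:ℤ)*b = (n:ℤ)*m := by rw [hbm']
      have P1 : (0:ℤ) ≤ ((c:ℤ)-1)*((m:ℤ)-d) := by apply mul_nonneg <;> linarith
      linarith [K2, hcbs, P1, hnbs]
  · -- Case B : a+c > n, b+d ≤ m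
    have hz : b + d - m = 0 := by omega
    rw [hz, Nat.mul_zero, Nat.add_zero] at hC1
    have HC : (p:ℤ) + q ≤ (a:ℤ)*b + (c:ℤ)*d := by exact_mod_cast hC1
    have Hac : (n:ℤ) + 1 ≤ (a:ℤ) + c := by exact_mod_cast hac
    have Hbd : (b:ℤ) + d ≤ m := by exact_mod_cast hbd
    have hK : (m:ℤ)*n + ((a:ℤ)+b+c+d) + 1 - m - 2*n ≤ (a:ℤ)*b + (c:ℤ)*d := by linarith
    have hbdm : (b:ℤ) + d = m := by
      by_contra h'
      have h'' : (b:ℤ) + d ≤ m - 1 := by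
        rcases lt_or_ge ((b:ℤ)+d) m with h | h
        · linarith
        · exact absurd (le_antisymm Hbd h) h'
      have P1 : (0:ℤ) ≤ ((n:ℤ)-a)*(b:ℤ) := by apply mul_nonneg <;> linarith
      have P2 : (0:ℤ) ≤ ((n:ℤ)-c)*(d:ℤ) := by apply mul_nonneg <;> linarith
      have P3 : (0:ℤ) ≤ ((n:ℤ)-1)*((m:ℤ)-1-b-d) := by apply mul_nonneg <;> linarith
      linarith [P1, P2, P3, hK]
    have hcd : (c:ℤ)*d = (c:ℤ)*m - (c:ℤ)*b := by
      have : (d:ℤ) = m - b := by linarith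
      rw [this]; ring
    have K1 : (m:ℤ)*((n:ℤ)-c) - ((n:ℤ)-a) - ((n:ℤ)-c) + 1 ≤ (b:ℤ)*((a:ℤ)-c) := by
      linarith [hK, hcd, hbdm]
    have hab' : (a:ℤ)*b = (a:ℤ)*m - (a:ℤ)*d := by
      have : (b:ℤ) = m - d := by linarith
      rw [this]; ring
    have K2 : (m:ℤ)*((n:ℤ)-a) - ((n:ℤ)-a) - ((n:ℤ)-c) + 1 ≤ (d:ℤ)*((c:ℤ)-a) := by
      linarith [hK, hab', hbdm]
    rcases le_or_gt a c with hac2 | hac2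
    · have Hac2 : (a:ℤ) ≤ c := by exact_mod_cast hac2
      have hda : (0:ℤ) ≤ (b:ℤ)*((c:ℤ)-a) := by apply mul_nonneg <;> linarith
      have hcn' : (c:ℤ) = n := by
        by_contra h'
        have h'' : (c:ℤ) ≤ n - 1 := by
          rcases lt_or_ge (c:ℤ) n with h | h
          · linarith
          · exact absurd (le_antisymm Hcn h) h'
        have P1 : (0:ℤ) ≤ ((m:ℤ)-1)*((n:ℤ)-1-c) := by apply mul_nonneg <;> linarith
        linarith [P1, K1, hda]
      have hbns : (b:ℤ)*c = (b:ℤ)*n := by rw [hcn']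
      have hmcs : (m:ℤ)*c = (m:ℤ)*n := by rw [hcn']
      have P1 : (0:ℤ) ≤ ((b:ℤ)-1)*((n:ℤ)-a) := by apply mul_nonneg <;> linarith
      linarith [K1, hbns, P1, hmcs]
    · have Hac2 : (c:ℤ) ≤ a := by exact_mod_cast hac2.le
      have hda : (0:ℤ) ≤ (d:ℤ)*((a:ℤ)-c) := by apply mul_nonneg <;> linarith
      have han' : (a:ℤ) = n := by
        by_contra h'
        have h'' : (a:ℤ) ≤ n - 1 := by
          rcases lt_or_ge (a:ℤ) n with h | h
          · linarith
          · exact absurd (le_antisymm Han h) h'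
        have P1 : (0:ℤ) ≤ ((m:ℤ)-1)*((n:ℤ)-1-a) := by apply mul_nonneg <;> linarith
        linarith [P1, K2, hda]
      have hdns : (d:ℤ)*a = (d:ℤ)*n := by rw [han']
      have hmas : (m:ℤ)*a = (m:ℤ)*n := by rw [han']
      have P1 : (0:ℤ) ≤ ((d:ℤ)-1)*((n:ℤ)-c) := by apply mul_nonneg <;> linarith
      linarith [K2, hdns, P1, hmas]
  · -- Case C : a+c > n, b+d > m
    have HC : (p:ℤ) + q + ((a:ℤ)+c-n)*((b:ℤ)+d-m) ≤ (a:ℤ)*b + (c:ℤ)*d := by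
      have e1 : ((a + c - n : ℕ) : ℤ) = (a:ℤ)+c-n := by omega
      have e2 : ((b + d - m : ℕ) : ℤ) = (b:ℤ)+d-m := by omega
      have h := hC1
      zify at h
      rw [e1, e2] at h
      exact h
    have Hac : (n:ℤ) + 1 ≤ (a:ℤ) + c := by exact_mod_cast hac
    have Hbd : (m:ℤ) + 1 ≤ (b:ℤ) + d := by exact_mod_cast hbd
    have hE : ((n:ℤ)-a)*((m:ℤ)-d) + ((m:ℤ)-b)*((n:ℤ)-c) + m + 1 ≤
        ((n:ℤ)-a)+((m:ℤ)-b)+((n:ℤ)-c)+((m:ℤ)-d) := by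
      have hid : (a:ℤ)*b + (c:ℤ)*d - ((a:ℤ)+c-n)*((b:ℤ)+d-m)
          = (n:ℤ)*m - ((n:ℤ)-a)*((m:ℤ)-d) - ((m:ℤ)-b)*((n:ℤ)-c) := by ring
      linarith [HC, H1, hid]
    have hR : (m:ℤ)*n + 2*a + 2*b + 3 - m - 2*n ≤ 3*((a:ℤ)*b) := by linarith [H2, Hpab, Hq]
    have hR' : (m:ℤ)*n + 2*c + 2*d + 3 - m - 2*n ≤ 3*((c:ℤ)*d) := by linarith [H3, Hqcd, Hp]
    have hBD : (b:ℤ) = m ∨ (d:ℤ) = m := by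
      by_contra hcon2
      push_neg at hcon2
      have hb' : (b:ℤ) ≤ m - 1 := by omega
      have hd' : (d:ℤ) ≤ m - 1 := by omega
      have P1 : (0:ℤ) ≤ ((n:ℤ)-a)*((m:ℤ)-d-1) := by apply mul_nonneg <;> linarith
      have P2 : (0:ℤ) ≤ ((m:ℤ)-b-1)*((n:ℤ)-c) := by apply mul_nonneg <;> linarith
      linarith [hE, P1, P2]
    rcases hBD with hb | hd
    · -- b = m
      have hz2 : ((m:ℤ)-b)*((n:ℤ)-c) = 0 := by rw [hb]; ring
      have hE' : ((n:ℤ)-a)*((m:ℤ)-d) + m + 1 ≤ ((n:ℤ)-a)+((n:ℤ)-c)+((m:ℤ)-d) := by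
        linarith [hE, hz2]
      have hsub : (d:ℤ) = m ∨ (a:ℤ) = n := by
        by_contra hcon2
        push_neg at hcon2
        have hd' : (d:ℤ) ≤ m - 1 := by omega
        have ha' : (a:ℤ) ≤ n - 1 := by omega
        have P1 : (0:ℤ) ≤ ((n:ℤ)-a-1)*((m:ℤ)-d-1) := by apply mul_nonneg <;> linarith
        linarith [hE', P1]
      rcases hsub with hd | ha
      · have hz3 : ((n:ℤ)-a)*((m:ℤ)-d) = 0 := by rw [hd]; ring
        linarith [hE', hz3]
      · have hz3 : ((n:ℤ)-a)*((m:ℤ)-d) = 0 := by rw [ha]; ring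
        have hcd2 : (c:ℤ) + d ≤ n - 1 := by linarith [hE', hz3, ha]
        exact smallside n m c d Hn Hnm Hc1 Hd1 hcd2 hR'
    · -- d = m
      have hz2 : ((n:ℤ)-a)*((m:ℤ)-d) = 0 := by rw [hd]; ring
      have hE' : ((m:ℤ)-b)*((n:ℤ)-c) + m + 1 ≤ ((n:ℤ)-a)+((m:ℤ)-b)+((n:ℤ)-c) := by
        linarith [hE, hz2]
      have hsub : (b:ℤ) = m ∨ (c:ℤ) = n := by
        by_contra hcon2
        push_neg at hcon2
        have hb' : (b:ℤ) ≤ m - 1 := by omega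
        have hc' : (c:ℤ) ≤ n - 1 := by omega
        have P1 : (0:ℤ) ≤ ((m:ℤ)-b-1)*((n:ℤ)-c-1) := by apply mul_nonneg <;> linarith
        linarith [hE', P1]
      rcases hsub with hb | hc
      · have hz3 : ((m:ℤ)-b)*((n:ℤ)-c) = 0 := by rw [hb]; ring
        linarith [hE', hz3]
      · have hz3 : ((m:ℤ)-b)*((n:ℤ)-c) = 0 := by rw [hc]; ring
        have hab2 : (a:ℤ) + b ≤ n - 1 := by linarith [hE', hz3, hc]
        exact smallside n m a b Hn Hnm Ha1 Hb1 hab2 hR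


variable {n m : ℕ}

def key (m : ℕ) (v : Fin n × Fin m) : ℕ := v.1.val * m + v.2.val

lemma key_inj (u v : Fin n × Fin m) (h : key m u = key m v) : u = v := by
  unfold key at h
  have h2 := u.2.isLt; have h4 := v.2.isLt
  have h1 : u.1.val = v.1.val := by
    rcases Nat.lt_trichotomy u.1.val v.1.val with hl | he | hl
    · exfalso
      have : u.1.val * m + m ≤ v.1.val * m := by
        calc u.1.val * m + m = (u.1.val + 1) * m := by ring
        _ ≤ v.1.val * m := Nat.mul_le_mul_right m hl
      linarith
    · exact he
    · exfalso
      have : v.1.val * m + m ≤ u.1.val * m := by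
        calc v.1.val * m + m = (v.1.val + 1) * m := by ring
        _ ≤ u.1.val * m := Nat.mul_le_mul_right m hl
      linarith
  have h3 : u.2.val = v.2.val := by
    have : u.1.val * m = v.1.val * m := by rw [h1]
    omega
  exact Prod.ext (Fin.ext h1) (Fin.ext h3)

def emax : Sym2 (Fin n × Fin m) → Fin n × Fin m :=
  Sym2.lift ⟨fun u v => if key m u ≤ key m v then v else u, by
    intro u v
    dsimp only
    by_cases h1 : key m u ≤ key m v <;> by_cases h2 : key m v ≤ key m u <;>
      simp only [h1, h2, if_pos, if_neg, if_true, if_false]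
    · exact (key_inj _ _ (le_antisymm h1 h2)).symm
    · omega⟩

def emin : Sym2 (Fin n × Fin m) → Fin n × Fin m :=
  Sym2.lift ⟨fun u v => if key m u ≤ key m v then u else v, by
    intro u v
    dsimp only
    by_cases h1 : key m u ≤ key m v <;> by_cases h2 : key m v ≤ key m u <;>
      simp only [h1, h2, if_pos, if_neg, if_true, if_false]
    · exact (key_inj _ _ (le_antisymm h1 h2))
    · omega⟩

lemma emax_mk (u v : Fin n × Fin m) :
    emax s(u,v) = if key m u ≤ key m v then v else u := rfl

lemma emin_mk (u v : Fin n × Fin m) :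
    emin s(u,v) = if key m u ≤ key m v then u else v := rfl

/-- structure of grid edges -/
lemma edge_struct (e : Sym2 (Fin n × Fin m)) (he : e ∈ (gridGraph n m).edgeSet) :
    e = s(emin e, emax e) ∧
    (((emin e).1 = (emax e).1 ∧ (emin e).2.val + 1 = (emax e).2.val) ∨
     ((emin e).1.val + 1 = (emax e).1.val ∧ (emin e).2 = (emax e).2)) := by
  induction e using Sym2.ind with
  | _ u v =>
  rw [SimpleGraph.mem_edgeSet] at he
  have hadj := he
  rw [gridGraph, SimpleGraph.boxProd_adj] at hadj
  have hm : 0 < m := u.2.pos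
  rcases hadj with ⟨h1, h2⟩ | ⟨h2, h1⟩
  · -- vertical edge : pathGraph n adj on first coordinate, second equal
    rw [SimpleGraph.pathGraph_adj] at h1
    rcases h1 with h1 | h1
    · -- u.1+1 = v.1 : key u < key v
      have hk : key m u ≤ key m v := by
        unfold key
        have : u.1.val * m + m ≤ v.1.val * m := by
          calc u.1.val * m + m = (u.1.val + 1) * m := by ring
          _ ≤ v.1.val * m := Nat.mul_le_mul_right m (by omega)
        omega
      rw [emax_mk, emin_mk, if_pos hk, if_pos hk]
      exact ⟨rfl, Or.inr ⟨h1, h2⟩⟩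
    · -- v.1+1 = u.1
      have hk : ¬ (key m u ≤ key m v) := by
        unfold key
        have : v.1.val * m + m ≤ u.1.val * m := by
          calc v.1.val * m + m = (v.1.val + 1) * m := by ring
          _ ≤ u.1.val * m := Nat.mul_le_mul_right m (by omega)
        omega
      rw [emax_mk, emin_mk, if_neg hk, if_neg hk]
      exact ⟨Sym2.eq_swap, Or.inr ⟨h1, h2.symm⟩⟩
  · -- horizontal edge : h1 : u.1 = v.1, h2 : pathGraph m adj u.2 v.2
    rw [SimpleGraph.pathGraph_adj] at h2
    rcases h2 with h2 | h2
    · have hk : key m u ≤ key m v := by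
        unfold key
        have : u.1.val * m = v.1.val * m := by rw [h1]
        omega
      rw [emax_mk, emin_mk, if_pos hk, if_pos hk]
      exact ⟨rfl, Or.inl ⟨h1, h2⟩⟩
    · have hk : ¬ (key m u ≤ key m v) := by
        unfold key
        have heq : u.1.val * m = v.1.val * m := by rw [h1]
        have hne : u.2.val ≠ v.2.val := by omega
        omega
      rw [emax_mk, emin_mk, if_neg hk, if_neg hk]
      exact ⟨Sym2.eq_swap, Or.inl ⟨h1.symm, h2⟩⟩

lemma emin_ne_emax (e : Sym2 (Fin n × Fin m)) (he : e ∈ (gridGraph n m).edgeSet) :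
    emin e ≠ emax e := by
  obtain ⟨-, h⟩ := edge_struct e he
  rcases h with ⟨h1, h2⟩ | ⟨h1, h2⟩
  · intro h; rw [h] at h2; omega
  · intro h; rw [h] at h1; omega

lemma emin_mem (e : Sym2 (Fin n × Fin m)) (he : e ∈ (gridGraph n m).edgeSet) :
    emin e ∈ e := by
  have h := Sym2.mem_mk_left (emin e) (emax e)
  rwa [← (edge_struct e he).1] at h

lemma emax_mem (e : Sym2 (Fin n × Fin m)) (he : e ∈ (gridGraph n m).edgeSet) :
    emax e ∈ e := by
  have h := Sym2.mem_mk_right (emin e) (emax e)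
  rwa [← (edge_struct e he).1] at h


def supp (X : Finset (Sym2 (Fin n × Fin m))) : Finset (Fin n × Fin m) :=
  X.biUnion (fun e => Finset.univ.filter (· ∈ e))

lemma mem_supp {X : Finset (Sym2 (Fin n × Fin m))} {v : Fin n × Fin m} :
    v ∈ supp X ↔ ∃ e ∈ X, v ∈ e := by
  simp [supp]

lemma shareVertex_symm {V : Type*} {e f : Sym2 V} (h : shareVertex e f) : shareVertex f e := by
  obtain ⟨v, h1, h2⟩ := h; exact ⟨v, h2, h1⟩

/-- supports of two cross-nonadjacent edge families are disjoint -/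
lemma supp_disjoint {X Y : Finset (Sym2 (Fin n × Fin m))}
    (hXY : Disjoint X Y)
    (h : ∀ e ∈ X, ∀ f ∈ Y, e ≠ f → ¬ shareVertex e f) :
    Disjoint (supp X) (supp Y) := by
  rw [Finset.disjoint_left]
  intro v hvX hvY
  obtain ⟨e, heX, hve⟩ := mem_supp.1 hvX
  obtain ⟨f, hfY, hvf⟩ := mem_supp.1 hvY
  have hef : e ≠ f := by
    intro hh; subst hh; exact (Finset.disjoint_left.1 hXY) heX hfY
  exact h e heX f hfY hef ⟨v, hve, hvf⟩

/-- the support of a matching has twice as many vertices -/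
lemma supp_matching {C : Finset (Sym2 (Fin n × Fin m))}
    (hC : ∀ e ∈ C, e ∈ (gridGraph n m).edgeSet)
    (h : ∀ e ∈ C, ∀ f ∈ C, e ≠ f → ¬ shareVertex e f) :
    (supp C).card = 2 * C.card := by
  rw [supp, Finset.card_biUnion]
  · rw [Finset.sum_congr rfl (g := fun _ => 2), Finset.sum_const, smul_eq_mul, Nat.mul_comm]
    intro e he
    obtain ⟨hrep, -⟩ := edge_struct e (hC e he)
    have hne := emin_ne_emax e (hC e he)
    have : Finset.univ.filter (· ∈ e) = {emin e, emax e} := by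
      ext w
      simp only [Finset.mem_filter, Finset.mem_univ, true_and, Finset.mem_insert,
        Finset.mem_singleton]
      constructor
      · intro hw; rw [hrep] at hw; exact Sym2.mem_iff.1 hw
      · intro hw; rw [hrep]; exact Sym2.mem_iff.2 hw
    rw [this, Finset.card_insert_of_notMem (by simpa using hne), Finset.card_singleton]
  · intro e he f hf hef
    rw [Function.onFun, Finset.disjoint_left]
    intro v hv1 hv2
    simp only [Finset.mem_filter] at hv1 hv2
    exact h e he f hf hef ⟨v, hv1.2, hv2.2⟩

/-- every support vertex bound : S fits in its rows × cols frame -/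
lemma supp_subset_frame (S : Finset (Fin n × Fin m)) :
    S ⊆ (S.image Prod.fst) ×ˢ (S.image Prod.snd) := by
  intro v hv
  rw [Finset.mem_product]
  exact ⟨Finset.mem_image_of_mem _ hv, Finset.mem_image_of_mem _ hv⟩

lemma card_le_frame (S : Finset (Fin n × Fin m)) :
    S.card ≤ (S.image Prod.fst).card * (S.image Prod.snd).card := by
  calc S.card ≤ ((S.image Prod.fst) ×ˢ (S.image Prod.snd)).card :=
        Finset.card_le_card (supp_subset_frame S)
  _ = _ := Finset.card_product _ _

/-- coupling inequality -/
lemma coupling (S T : Finset (Fin n × Fin m)) (hST : Disjoint S T) :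
    S.card + T.card +
      ((S.image Prod.fst) ∩ (T.image Prod.fst)).card *
      ((S.image Prod.snd) ∩ (T.image Prod.snd)).card ≤
    (S.image Prod.fst).card * (S.image Prod.snd).card +
    (T.image Prod.fst).card * (T.image Prod.snd).card := by
  set F : Finset (Fin n × Fin m) := (S.image Prod.fst) ×ˢ (S.image Prod.snd) with hF
  set FT : Finset (Fin n × Fin m) := (T.image Prod.fst) ×ˢ (T.image Prod.snd) with hFT
  have h1 : S.card + (T ∩ F).card ≤ F.card := by
    rw [← Finset.card_union_of_disjoint]
    · exact Finset.card_le_card (by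
        intro v hv
        rcases Finset.mem_union.1 hv with h | h
        · exact supp_subset_frame S h
        · exact (Finset.mem_inter.1 h).2)
    · exact Finset.disjoint_left.2 (fun v hvS hvT =>
        (Finset.disjoint_left.1 hST) hvS (Finset.mem_inter.1 hvT).1)
  have h2 : (T \ F).card + (FT ∩ F).card ≤ FT.card := by
    rw [← Finset.card_union_of_disjoint]
    · exact Finset.card_le_card (by
        intro v hv
        rcases Finset.mem_union.1 hv with h | h
        · exact supp_subset_frame T (Finset.mem_sdiff.1 h).1
        · exact (Finset.mem_inter.1 h).1)
    · exact Finset.disjoint_left.2 (fun v hv1 hv2 =>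
        (Finset.mem_sdiff.1 hv1).2 (Finset.mem_inter.1 hv2).2)
  have h3 : (T ∩ F).card + (T \ F).card = T.card := Finset.card_inter_add_card_sdiff T F
  have h4 : ((S.image Prod.fst) ∩ (T.image Prod.fst)).card *
      ((S.image Prod.snd) ∩ (T.image Prod.snd)).card ≤ (FT ∩ F).card := by
    have : ((T.image Prod.fst) ∩ (S.image Prod.fst)) ×ˢ
        ((T.image Prod.snd) ∩ (S.image Prod.snd)) = FT ∩ F := by
      ext v
      simp only [Finset.mem_product, Finset.mem_inter, hF, hFT]
      tauto
    rw [← this, Finset.card_product]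
    apply Nat.mul_le_mul <;>
      exact le_of_eq (by rw [Finset.inter_comm])
  have hFc : F.card = (S.image Prod.fst).card * (S.image Prod.snd).card :=
    Finset.card_product _ _
  have hFTc : FT.card = (T.image Prod.fst).card * (T.image Prod.snd).card :=
    Finset.card_product _ _
  omega

/-- row-minimum set -/
lemma rowmin_card (S : Finset (Fin n × Fin m)) :
    (S.filter (fun v => ∀ w ∈ S, w.1 = v.1 → v.2 ≤ w.2)).card = (S.image Prod.fst).card := by
  set RM := S.filter (fun v => ∀ w ∈ S, w.1 = v.1 → v.2 ≤ w.2) with hRM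
  have himg : RM.image Prod.fst = S.image Prod.fst := by
    apply Finset.Subset.antisymm
    · exact Finset.image_subset_image (Finset.filter_subset _ _)
    · intro r hr
      obtain ⟨v, hv, hvr⟩ := Finset.mem_image.1 hr
      obtain ⟨w, hw, hwmin⟩ := Finset.exists_min_image (S.filter (fun x => x.1 = r))
        (fun x => x.2) ⟨v, Finset.mem_filter.2 ⟨hv, hvr⟩⟩
      rw [Finset.mem_filter] at hw
      refine Finset.mem_image.2 ⟨w, Finset.mem_filter.2 ⟨hw.1, ?_⟩, hw.2⟩
      intro x hx hx1
      exact hwmin x (Finset.mem_filter.2 ⟨hx, by rw [hx1, hw.2]⟩)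
  have hinj : Set.InjOn Prod.fst (RM : Set (Fin n × Fin m)) := by
    intro v hv w hw hvw
    simp only [Finset.coe_filter, Set.mem_setOf_eq, hRM] at hv hw
    have h1 := hv.2 w hw.1 (by rw [hvw])
    have h2 := hw.2 v hv.1 (by rw [hvw])
    exact Prod.ext hvw (le_antisymm h1 h2)
  rw [← himg, Finset.card_image_of_injOn hinj]

lemma colmin_card (S : Finset (Fin n × Fin m)) :
    (S.filter (fun v => ∀ w ∈ S, w.2 = v.2 → v.1 ≤ w.1)).card = (S.image Prod.snd).card := by
  set CM := S.filter (fun v => ∀ w ∈ S, w.2 = v.2 → v.1 ≤ w.1) with hCM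
  have himg : CM.image Prod.snd = S.image Prod.snd := by
    apply Finset.Subset.antisymm
    · exact Finset.image_subset_image (Finset.filter_subset _ _)
    · intro r hr
      obtain ⟨v, hv, hvr⟩ := Finset.mem_image.1 hr
      obtain ⟨w, hw, hwmin⟩ := Finset.exists_min_image (S.filter (fun x => x.2 = r))
        (fun x => x.1) ⟨v, Finset.mem_filter.2 ⟨hv, hvr⟩⟩
      rw [Finset.mem_filter] at hw
      refine Finset.mem_image.2 ⟨w, Finset.mem_filter.2 ⟨hw.1, ?_⟩, hw.2⟩
      intro x hx hx1
      exact hwmin x (Finset.mem_filter.2 ⟨hx, by rw [hx1, hw.2]⟩)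
  have hinj : Set.InjOn Prod.snd (CM : Set (Fin n × Fin m)) := by
    intro v hv w hw hvw
    simp only [Finset.coe_filter, Set.mem_setOf_eq, hCM] at hv hw
    have h1 := hv.2 w hw.1 (by rw [hvw])
    have h2 := hw.2 v hv.1 (by rw [hvw])
    exact Prod.ext (le_antisymm h1 h2) hvw
  rw [← himg, Finset.card_image_of_injOn hinj]

/-- key counting lemma : edges within support vs rows and columns -/
lemma edge_count (X : Finset (Sym2 (Fin n × Fin m)))
    (hX : ∀ e ∈ X, e ∈ (gridGraph n m).edgeSet) :
    X.card + ((supp X).image Prod.fst).card + ((supp X).image Prod.snd).card ≤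
      2 * (supp X).card := by
  classical
  set S := supp X with hS
  set RM := S.filter (fun v => ∀ w ∈ S, w.1 = v.1 → v.2 ≤ w.2) with hRM
  set CM := S.filter (fun v => ∀ w ∈ S, w.2 = v.2 → v.1 ≤ w.1) with hCM
  set φ : Sym2 (Fin n × Fin m) → (Fin n × Fin m) × Bool :=
    fun e => (emax e, decide ((emin e).1 = (emax e).1)) with hφ
  have hmem : ∀ e ∈ X, emax e ∈ S ∧ emin e ∈ S := by
    intro e he
    exact ⟨mem_supp.2 ⟨e, he, emax_mem e (hX e he)⟩,
           mem_supp.2 ⟨e, he, emin_mem e (hX e he)⟩⟩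
  -- injectivity
  have hinj : Set.InjOn φ (X : Set (Sym2 (Fin n × Fin m))) := by
    intro e he f hf hef
    simp only [hφ, Prod.mk.injEq, decide_eq_decide] at hef
    obtain ⟨hrepe, hstre⟩ := edge_struct e (hX e (Finset.mem_coe.1 he))
    obtain ⟨hrepf, hstrf⟩ := edge_struct f (hX f (Finset.mem_coe.1 hf))
    have hmaxeq : emax e = emax f := hef.1
    have hmineq : emin e = emin f := by
      rcases hstre with ⟨h1, h2⟩ | ⟨h1, h2⟩
      · -- e horizontal
        rcases hstrf with ⟨h3, h4⟩ | ⟨h3, h4⟩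
        · -- f horizontal
          apply Prod.ext
          · rw [h1, h3, hmaxeq]
          · apply Fin.ext
            have h5 : ((emax e).2 : ℕ) = ((emax f).2 : ℕ) := by rw [hmaxeq]
            omega
        · -- f vertical : contradiction with Bool equality
          exfalso
          have hbe : (emin e).1 = (emax e).1 := h1
          have hbf : (emin f).1 ≠ (emax f).1 := by
            intro hc; rw [hc] at h3; omega
          exact hbf (hef.2.mp hbe)
      · rcases hstrf with ⟨h3, h4⟩ | ⟨h3, h4⟩
        · exfalso
          have hbe : (emin e).1 ≠ (emax e).1 := by
            intro hc; rw [hc] at h1; omega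
          exact hbe (hef.2.mpr h3)
        · apply Prod.ext
          · apply Fin.ext
            rw [hmaxeq] at h1
            omega
          · rw [h2, h4, hmaxeq]
    rw [hrepe, hrepf, hmineq, hmaxeq]
  -- image bound
  have himg : ∀ e ∈ X, φ e ∈ ((S \ RM) ×ˢ {true}) ∪ ((S \ CM) ×ˢ {false}) := by
    intro e he
    simp only [hφ]
    obtain ⟨hrepe, hstre⟩ := edge_struct e (hX e he)
    obtain ⟨hmax, hmin⟩ := hmem e he
    rcases hstre with ⟨h1, h2⟩ | ⟨h1, h2⟩
    · -- horizontal : lands in (S \ RM) × {true}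
      apply Finset.mem_union_left
      rw [Finset.mem_product]
      constructor
      · rw [Finset.mem_sdiff]
        refine ⟨hmax, ?_⟩
        rw [hRM, Finset.mem_filter]
        rintro ⟨-, hmin'⟩
        have h5 := Fin.le_def.mp (hmin' (emin e) hmin h1)
        dsimp only at h5
        omega
      · simp [h1]
    · apply Finset.mem_union_right
      rw [Finset.mem_product]
      constructor
      · rw [Finset.mem_sdiff]
        refine ⟨hmax, ?_⟩
        rw [hCM, Finset.mem_filter]
        rintro ⟨-, hmin'⟩
        have h5 := Fin.le_def.mp (hmin' (emin e) hmin h2)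
        dsimp only at h5
        omega
      · have : (emin e).1 ≠ (emax e).1 := by
          intro hc; rw [hc] at h1; omega
        simp [this]
  have hcard : X.card ≤ (S \ RM).card + (S \ CM).card := by
    calc X.card ≤ (((S \ RM) ×ˢ {true}) ∪ ((S \ CM) ×ˢ {false})).card :=
          Finset.card_le_card_of_injOn φ himg hinj
    _ ≤ ((S \ RM) ×ˢ ({true} : Finset Bool)).card +
        ((S \ CM) ×ˢ ({false} : Finset Bool)).card := Finset.card_union_le _ _
    _ = (S \ RM).card + (S \ CM).card := by
        rw [Finset.card_product, Finset.card_product]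
        simp
  have hRMsub : RM ⊆ S := Finset.filter_subset _ _
  have hCMsub : CM ⊆ S := Finset.filter_subset _ _
  have h1 := Finset.card_sdiff_of_subset hRMsub
  have h2 := Finset.card_sdiff_of_subset hCMsub
  have h3 : RM.card = (S.image Prod.fst).card := rowmin_card S
  have h4 : CM.card = (S.image Prod.snd).card := colmin_card S
  have h5 := Finset.card_le_card hRMsub
  have h6 := Finset.card_le_card hCMsub
  omega

lemma slc_main (n m : ℕ) (hn : 2 ≤ n) (hm : 2 ≤ m) (hnm : n ≤ m)
    (hne : Even n) (hme : Even m) :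
    SuperLineComplete (gridGraph n m) (m * n + 1 - (m + n) / 2 - (min m n) / 2) := by
  classical
  intro A B hA hB hcA hcB hAB
  by_contra hcon
  push_neg at hcon
  set X := A \ B with hX
  set Y := B \ A with hY
  set C := A ∩ B with hC
  have hXA : X ⊆ A := Finset.sdiff_subset
  have hYB : Y ⊆ B := Finset.sdiff_subset
  have hCA : C ⊆ A := Finset.inter_subset_left
  have hCB : C ⊆ B := Finset.inter_subset_right
  have hXsub : ∀ e ∈ X, e ∈ (gridGraph n m).edgeSet := fun e he => hA (hXA he)
  have hYsub : ∀ e ∈ Y, e ∈ (gridGraph n m).edgeSet := fun e he => hB (hYB he)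
  have hCsub : ∀ e ∈ C, e ∈ (gridGraph n m).edgeSet := fun e he => hA (hCA he)
  have hXne : X.Nonempty := by
    rw [Finset.sdiff_nonempty]
    intro hsub
    exact hAB (Finset.eq_of_subset_of_card_le hsub (le_of_eq (hcB.trans hcA.symm)))
  have hYne : Y.Nonempty := by
    rw [Finset.sdiff_nonempty]
    intro hsub
    exact hAB (Finset.eq_of_subset_of_card_le hsub (le_of_eq (hcA.trans hcB.symm))).symm
  have hXY : ∀ e ∈ X, ∀ f ∈ Y, e ≠ f → ¬ shareVertex e f :=
    fun e he f hf hef => hcon e (hXA he) f (hYB hf) hef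
  have hXC : ∀ e ∈ X, ∀ f ∈ C, e ≠ f → ¬ shareVertex e f :=
    fun e he f hf hef => hcon e (hXA he) f (hCB hf) hef
  have hYC : ∀ e ∈ Y, ∀ f ∈ C, e ≠ f → ¬ shareVertex e f :=
    fun e he f hf hef hsh => hcon f (hCA hf) e (hYB he) (Ne.symm hef) (shareVertex_symm hsh)
  have hCC : ∀ e ∈ C, ∀ f ∈ C, e ≠ f → ¬ shareVertex e f :=
    fun e he f hf hef => hcon e (hCA he) f (hCB hf) hef
  have hdXY : Disjoint X Y := disjoint_sdiff_sdiff
  have hdXC : Disjoint X C := Finset.disjoint_left.2 (fun e he hec =>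
    (Finset.mem_sdiff.1 he).2 (hCB hec))
  have hdYC : Disjoint Y C := Finset.disjoint_left.2 (fun e he hec =>
    (Finset.mem_sdiff.1 he).2 (hCA hec))
  have hdST : Disjoint (supp X) (supp Y) := supp_disjoint hdXY hXY
  have hdSU : Disjoint (supp X) (supp C) := supp_disjoint hdXC hXC
  have hdTU : Disjoint (supp Y) (supp C) := supp_disjoint hdYC hYC
  have htotal : (supp X).card + (supp Y).card + (supp C).card ≤ m * n := by
    have hd2 : Disjoint (supp X ∪ supp Y) (supp C) :=
      Finset.disjoint_union_left.2 ⟨hdSU, hdTU⟩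
    calc (supp X).card + (supp Y).card + (supp C).card
        = (supp X ∪ supp Y ∪ supp C).card := by
          rw [Finset.card_union_of_disjoint hd2, Finset.card_union_of_disjoint hdST]
    _ ≤ (Finset.univ : Finset (Fin n × Fin m)).card := Finset.card_le_card (Finset.subset_univ _)
    _ = m * n := by simp [Nat.mul_comm]
  have hUcard : (supp C).card = 2 * C.card := supp_matching hCsub hCC
  have hXcount := edge_count X hXsub
  have hYcount := edge_count Y hYsub
  have hpab : (supp X).card ≤
      ((supp X).image Prod.fst).card * ((supp X).image Prod.snd).card := card_le_frame _
  have hqcd : (supp Y).card ≤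
      ((supp Y).image Prod.fst).card * ((supp Y).image Prod.snd).card := card_le_frame _
  have hcoup := coupling (supp X) (supp Y) hdST
  have hrowint : ((supp X).image Prod.fst).card + ((supp Y).image Prod.fst).card ≤
      n + (((supp X).image Prod.fst) ∩ ((supp Y).image Prod.fst)).card := by
    have h1 := Finset.card_inter_add_card_union
      ((supp X).image Prod.fst) ((supp Y).image Prod.fst)
    have h2 : (((supp X).image Prod.fst) ∪ ((supp Y).image Prod.fst)).card ≤ n := by
      calc _ ≤ (Finset.univ : Finset (Fin n)).card := Finset.card_le_card (Finset.subset_univ _)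
      _ = n := by simp
    omega
  have hcolint : ((supp X).image Prod.snd).card + ((supp Y).image Prod.snd).card ≤
      m + (((supp X).image Prod.snd) ∩ ((supp Y).image Prod.snd)).card := by
    have h1 := Finset.card_inter_add_card_union
      ((supp X).image Prod.snd) ((supp Y).image Prod.snd)
    have h2 : (((supp X).image Prod.snd) ∪ ((supp Y).image Prod.snd)).card ≤ m := by
      calc _ ≤ (Finset.univ : Finset (Fin m)).card := Finset.card_le_card (Finset.subset_univ _)
      _ = m := by simp
    omega
  have hSfacts : ∀ (Z : Finset (Sym2 (Fin n × Fin m))), Z.Nonempty →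
      (∀ e ∈ Z, e ∈ (gridGraph n m).edgeSet) → 2 ≤ (supp Z).card ∧ (supp Z).Nonempty := by
    intro Z hZne hZsub
    obtain ⟨e, he⟩ := hZne
    have h1 : emin e ∈ supp Z := mem_supp.2 ⟨e, he, emin_mem e (hZsub e he)⟩
    have h2 : emax e ∈ supp Z := mem_supp.2 ⟨e, he, emax_mem e (hZsub e he)⟩
    have h3 := emin_ne_emax e (hZsub e he)
    constructor
    · calc 2 = ({emin e, emax e} : Finset (Fin n × Fin m)).card := by
            rw [Finset.card_insert_of_notMem (by simpa using h3), Finset.card_singleton]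
      _ ≤ (supp Z).card := Finset.card_le_card (by
            intro w hw
            rcases Finset.mem_insert.1 hw with h | h
            · rwa [h]
            · rw [Finset.mem_singleton.1 h]; exact h2)
    · exact ⟨emin e, h1⟩
  obtain ⟨hp2, hSne⟩ := hSfacts X hXne hXsub
  obtain ⟨hq2, hTne⟩ := hSfacts Y hYne hYsub
  have ha1 : 1 ≤ ((supp X).image Prod.fst).card := Finset.card_pos.2 (hSne.image _)
  have hb1 : 1 ≤ ((supp X).image Prod.snd).card := Finset.card_pos.2 (hSne.image _)
  have hc1 : 1 ≤ ((supp Y).image Prod.fst).card := Finset.card_pos.2 (hTne.image _)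
  have hd1 : 1 ≤ ((supp Y).image Prod.snd).card := Finset.card_pos.2 (hTne.image _)
  have han : ((supp X).image Prod.fst).card ≤ n := by
    calc _ ≤ (Finset.univ : Finset (Fin n)).card := Finset.card_le_card (Finset.subset_univ _)
    _ = n := by simp
  have hbm : ((supp X).image Prod.snd).card ≤ m := by
    calc _ ≤ (Finset.univ : Finset (Fin m)).card := Finset.card_le_card (Finset.subset_univ _)
    _ = m := by simp
  have hcn : ((supp Y).image Prod.fst).card ≤ n := by
    calc _ ≤ (Finset.univ : Finset (Fin n)).card := Finset.card_le_card (Finset.subset_univ _)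
    _ = n := by simp
  have hdm : ((supp Y).image Prod.snd).card ≤ m := by
    calc _ ≤ (Finset.univ : Finset (Fin m)).card := Finset.card_le_card (Finset.subset_univ _)
    _ = m := by simp
  have hsplitA : C.card + X.card = A.card := Finset.card_inter_add_card_sdiff A B
  have hsplitB : C.card + Y.card = B.card := by
    rw [hC, hY, Finset.inter_comm]
    exact Finset.card_inter_add_card_sdiff B A
  -- now fold everything
  set S := supp X with hS
  set T := supp Y with hT
  set U := supp C with hU
  set a := (S.image Prod.fst).card with ha
  set b := (S.image Prod.snd).card with hb
  set c := (T.image Prod.fst).card with hc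
  set d := (T.image Prod.snd).card with hd
  set p := S.card with hp
  set q := T.card with hq
  have hC1 : p + q + (a + c - n) * (b + d - m) ≤ a * b + c * d := by
    have h1 : (a + c - n) * (b + d - m) ≤
        ((S.image Prod.fst) ∩ (T.image Prod.fst)).card *
        ((S.image Prod.snd) ∩ (T.image Prod.snd)).card :=
      Nat.mul_le_mul (by omega) (by omega)
    linarith [hcoup, h1]
  rcases arith n m a b c d p q hn hnm ha1 han hb1 hbm hc1 hcn hd1 hdm hp2 hq2 hpab hqcd hC1
    with hI | hII | hII'
  all_goals {
    have hminr : min m n = n := min_eq_right hnm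
    rw [hminr] at hcA
    have hmn : m + n ≤ m * n := by
      calc m + n ≤ m + m := by omega
      _ = m * 2 := by ring
      _ ≤ m * n := Nat.mul_le_mul_left m hn
    have hne2 : n % 2 = 0 := Nat.even_iff.1 hne
    have hme2 : m % 2 = 0 := Nat.even_iff.1 hme
    clear hpab hqcd hcoup hC1 hrowint hcolint
    generalize hW : m * n = W at *
    omega
  }

/-- transport of SuperLineComplete along a graph isomorphism -/
lemma slc_transport {V W : Type*} [DecidableEq V] [DecidableEq W]
    {G : SimpleGraph V} {H : SimpleGraph W} (φ : G ≃g H) {r : ℕ}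
    (h : SuperLineComplete G r) : SuperLineComplete H r := by
  intro A B hA hB hcA hcB hAB
  set ψ : Sym2 W ↪ Sym2 V :=
    ⟨Sym2.map φ.symm, Sym2.map.injective φ.symm.injective⟩ with hψ
  have hmapE : ∀ (E : Finset (Sym2 W)), ↑E ⊆ H.edgeSet →
      ↑(E.map ψ) ⊆ G.edgeSet := by
    intro E hE e he
    rw [Finset.coe_map] at he
    obtain ⟨f, hf, rfl⟩ := he
    have hfH : f ∈ H.edgeSet := hE hf
    induction f using Sym2.ind with
    | _ u v =>
      rw [SimpleGraph.mem_edgeSet] at hfH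
      show Sym2.map φ.symm s(u,v) ∈ G.edgeSet
      rw [Sym2.map_pair_eq, SimpleGraph.mem_edgeSet]
      exact φ.symm.map_adj_iff.2 hfH
  obtain ⟨e, he, f, hf, hef, v, hv1, hv2⟩ :=
    h (A.map ψ) (B.map ψ) (hmapE A hA) (hmapE B hB)
      (by rw [Finset.card_map]; exact hcA) (by rw [Finset.card_map]; exact hcB)
      (fun hc => hAB (Finset.map_injective ψ hc))
  obtain ⟨e₀, he₀, rfl⟩ := Finset.mem_map.1 he
  obtain ⟨f₀, hf₀, rfl⟩ := Finset.mem_map.1 hf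
  refine ⟨e₀, he₀, f₀, hf₀, fun hc => hef (by rw [hc]), ?_⟩
  have hv1' : v ∈ Sym2.map φ.symm e₀ := hv1
  have hv2' : v ∈ Sym2.map φ.symm f₀ := hv2
  rw [Sym2.mem_map] at hv1' hv2'
  obtain ⟨w₁, hw₁, hww₁⟩ := hv1'
  obtain ⟨w₂, hw₂, hww₂⟩ := hv2'
  have : w₁ = w₂ := φ.symm.injective (hww₁.trans hww₂.symm)
  exact ⟨w₁, hw₁, this ▸ hw₂⟩

lemma lcIs_transport {V W : Type*} [DecidableEq V] [DecidableEq W]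
    {G : SimpleGraph V} {H : SimpleGraph W} (φ : G ≃g H) {k : ℕ}
    (h : lcIs G k) : lcIs H k := by
  obtain ⟨⟨hk0, hkc⟩, hlb⟩ := h
  exact ⟨⟨hk0, slc_transport φ hkc⟩,
    fun x hx => hlb ⟨hx.1, slc_transport φ.symm hx.2⟩⟩

lemma sym2_exists_mem {α : Type*} (e : Sym2 α) : ∃ v, v ∈ e := by
  induction e using Sym2.ind with
  | _ u v => exact ⟨u, Sym2.mem_mk_left u v⟩

/-- the half-grid construction : no SuperLineComplete below the threshold -/
lemma construct (n m : ℕ) (hn : 2 ≤ n) (hm : 2 ≤ m) (hme : Even m) (r : ℕ)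
    (hr0 : 0 < r) (hrv : r + n + m / 2 ≤ m * n) :
    ¬ SuperLineComplete (gridGraph n m) r := by
  classical
  obtain ⟨M, hM⟩ := hme
  subst hM
  set m := M + M with hm2
  have hM1 : 1 ≤ M := by omega
  have hn1 : 1 ≤ n := by omega
  intro hSLC
  set ι := ((Fin n × Fin (M-1)) ⊕ (Fin (n-1) × Fin M)) with hι
  -- left edges (columns < M) and right edges (columns ≥ M), parameterized by offset
  have hkey : ∀ o : ℕ, o = 0 ∨ o = M → ∃ E : Finset (Sym2 (Fin n × Fin m)),
      E.card = n * (M-1) + (n-1) * M ∧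
      (∀ e ∈ E, e ∈ (gridGraph n m).edgeSet) ∧
      (∀ e ∈ E, ∀ v ∈ e, o ≤ v.2.val ∧ v.2.val < o + M) := by
    intro o ho
    have hoM : o + M ≤ m := by omega
    refine ⟨(Finset.univ : Finset ι).image (fun x =>
      match x with
      | Sum.inl z => s((z.1, (⟨o + z.2.val, by have := z.2.isLt; omega⟩ : Fin m)),
                       (z.1, (⟨o + z.2.val + 1, by have := z.2.isLt; omega⟩ : Fin m)))
      | Sum.inr z => s(((⟨z.1.val, by have := z.1.isLt; omega⟩ : Fin n),
                        (⟨o + z.2.val, by have := z.2.isLt; omega⟩ : Fin m)),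
                       ((⟨z.1.val + 1, by have := z.1.isLt; omega⟩ : Fin n),
                        (⟨o + z.2.val, by have := z.2.isLt; omega⟩ : Fin m)))), ?_, ?_, ?_⟩
    · rw [Finset.card_image_of_injOn, Finset.card_univ]
      · simp [hι]
      · intro x hx y hy hxy
        rcases x with z | z <;> rcases y with w | w <;>
          simp only [Sym2.eq_iff, Prod.mk.injEq, Fin.mk.injEq, Fin.ext_iff] at hxy
        · rcases hxy with ⟨⟨h1, h2⟩, -⟩ | ⟨⟨h1, h2⟩, ⟨h3, h4⟩⟩
          · exact congrArg Sum.inl (Prod.ext (Fin.ext h1) (Fin.ext (by omega)))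
          · exfalso; omega
        · exfalso
          rcases hxy with ⟨⟨h1, h2⟩, ⟨h3, h4⟩⟩ | ⟨⟨h1, h2⟩, ⟨h3, h4⟩⟩ <;> omega
        · exfalso
          rcases hxy with ⟨⟨h1, h2⟩, ⟨h3, h4⟩⟩ | ⟨⟨h1, h2⟩, ⟨h3, h4⟩⟩ <;> omega
        · rcases hxy with ⟨⟨h1, h2⟩, ⟨h3, h4⟩⟩ | ⟨⟨h1, h2⟩, ⟨h3, h4⟩⟩
          · exact congrArg Sum.inr (Prod.ext (Fin.ext (by omega)) (Fin.ext (by omega)))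
          · exfalso; omega
    · intro e he
      rw [Finset.mem_image] at he
      obtain ⟨x, -, rfl⟩ := he
      rcases x with z | z <;> rw [SimpleGraph.mem_edgeSet, gridGraph, SimpleGraph.boxProd_adj]
      · exact Or.inr ⟨SimpleGraph.pathGraph_adj.2 (Or.inl rfl), rfl⟩
      · exact Or.inl ⟨SimpleGraph.pathGraph_adj.2 (Or.inl rfl), rfl⟩
    · intro e he v hv
      rw [Finset.mem_image] at he
      obtain ⟨x, -, rfl⟩ := he
      rcases x with z | z <;> rw [Sym2.mem_iff] at hv <;>
        rcases hv with rfl | rfl <;>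
        simp only [] <;>
        constructor <;> (try omega) <;> (have := z.2.isLt; omega)
  obtain ⟨EL, hELcard, hELedge, hELcol⟩ := hkey 0 (Or.inl rfl)
  obtain ⟨ER, hERcard, hERedge, hERcol⟩ := hkey M (Or.inr rfl)
  have hval : n * (M-1) + (n-1) * M + n + M = m * n := by
    rw [hm2]
    zify [hM1, hn1]
    ring
  have hrle : r ≤ n * (M-1) + (n-1) * M := by
    have h2 : (M + M) / 2 = M := by omega
    rw [h2] at hrv
    generalize hW : (M + M) * n = W at hval hrv
    omega
  obtain ⟨Afin, hAsub, hAcard⟩ := Finset.exists_subset_card_eq (hELcard ▸ hrle)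
  obtain ⟨Bfin, hBsub, hBcard⟩ := Finset.exists_subset_card_eq (hERcard ▸ hrle)
  have hAne : Afin.Nonempty := Finset.card_pos.1 (by omega)
  have hABne : Afin ≠ Bfin := by
    intro heq
    obtain ⟨e, he⟩ := hAne
    obtain ⟨v, hv⟩ := sym2_exists_mem e
    have h1 := (hELcol e (hAsub he) v hv).2
    have h2 := (hERcol e (hBsub (heq ▸ he)) v hv).1
    omega
  obtain ⟨e, he, f, hf, -, v, hv1, hv2⟩ :=
    hSLC Afin Bfin (fun e he => hELedge e (hAsub he)) (fun e he => hERedge e (hBsub he))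
      hAcard hBcard hABne
  have h1 := (hELcol e (hAsub he) v hv1).2
  have h2 := (hERcol f (hBsub hf) v hv2).1
  omega

lemma main_le (n m : ℕ) (hn : 2 ≤ n) (hm : 2 ≤ m) (hnm : n ≤ m)
    (hne : Even n) (hme : Even m) :
    lcIs (gridGraph n m) (m * n + 1 - (m + n) / 2 - (min m n) / 2) := by
  have hmn : m + n ≤ m * n := by
    calc m + n ≤ m + m := by omega
    _ = m * 2 := by ring
    _ ≤ m * n := Nat.mul_le_mul_left m hn
  have hminr : min m n = n := min_eq_right hnm
  have hne2 : n % 2 = 0 := Nat.even_iff.1 hne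
  have hme2 : m % 2 = 0 := Nat.even_iff.1 hme
  constructor
  · refine ⟨?_, slc_main n m hn hm hnm hne hme⟩
    rw [hminr]
    generalize hW : m * n = W at hmn ⊢
    omega
  · intro x hx
    obtain ⟨hx0, hxS⟩ := hx
    by_contra hlt
    push_neg at hlt
    refine construct n m hn hm hme x hx0 ?_ hxS
    rw [hminr] at hlt
    generalize hW : m * n = W at hmn hlt ⊢
    omega

end GridAux


theorem lc_grid_even_even (n m : ℕ) (hn : 2 ≤ n) (hm : 2 ≤ m)
    (hne : Even n) (hme : Even m) :
    lcIs (gridGraph n m) (m * n + 1 - (m + n) / 2 - (min m n) / 2) := by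
  rcases le_total n m with h | h
  · exact GridAux.main_le n m hn hm h hne hme
  · have h1 := GridAux.main_le m n hm hn h hme hne
    have hiso : gridGraph m n ≃g gridGraph n m := SimpleGraph.boxProdComm _ _
    have h2 := GridAux.lcIs_transport hiso h1
    rwa [show n * m + 1 - (n + m) / 2 - (min n m) / 2
        = m * n + 1 - (m + n) / 2 - (min m n) / 2 by
      rw [Nat.mul_comm, Nat.add_comm n m, Nat.min_comm]] at h2
end

section
/- Let n be even, n ≥ 2, and m ≥ 1. The grid graph P_n × P_m contains two vertex-disjoint edge sets C and D, each of size mn − m − n/2, such that no edge of C shares a vertex with any edge of D. Consequently the super line graph L_r(P_n × P_m) is not complete for any r ≤ mn − m − n/2. -/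
open SimpleGraph

/-- Horizontal edges in rows `[o, o+a)`. -/
def hmap (n m o a : ℕ) (ho : o + a ≤ n) (hm : 1 ≤ m) :
    Fin a × Fin (m - 1) → Sym2 (Fin n × Fin m) := fun p =>
  s( (⟨o + p.1.val, by have := p.1.isLt; omega⟩, ⟨p.2.val, by have := p.2.isLt; omega⟩),
     (⟨o + p.1.val, by have := p.1.isLt; omega⟩, ⟨p.2.val + 1, by have := p.2.isLt; omega⟩) )

/-- Vertical edges in rows `[o, o+a)`. -/
def vmap (n m o a : ℕ) (ho : o + a ≤ n) :
    Fin (a - 1) × Fin m → Sym2 (Fin n × Fin m) := fun p =>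
  s( (⟨o + p.1.val, by have := p.1.isLt; omega⟩, p.2),
     (⟨o + p.1.val + 1, by have := p.1.isLt; omega⟩, p.2) )

lemma hmap_inj (n m o a : ℕ) (ho : o + a ≤ n) (hm : 1 ≤ m) :
    Function.Injective (hmap n m o a ho hm) := by
  rintro ⟨i, j⟩ ⟨i', j'⟩ h
  simp only [hmap, Sym2.eq_iff, Prod.ext_iff, Fin.ext_iff] at h
  have := j.isLt
  have := j'.isLt
  ext <;> simp [Fin.ext_iff] <;> omega

lemma vmap_inj (n m o a : ℕ) (ho : o + a ≤ n) :
    Function.Injective (vmap n m o a ho) := by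
  rintro ⟨i, j⟩ ⟨i', j'⟩ h
  simp only [vmap, Sym2.eq_iff, Prod.ext_iff, Fin.ext_iff] at h
  have := i.isLt
  have := i'.isLt
  ext <;> simp [Fin.ext_iff] <;> omega

def halfEdges (n m o a : ℕ) (ho : o + a ≤ n) (hm : 1 ≤ m) :
    Finset (Sym2 (Fin n × Fin m)) :=
  Finset.univ.image (hmap n m o a ho hm) ∪ Finset.univ.image (vmap n m o a ho)

lemma halfEdges_card (n m o a : ℕ) (ho : o + a ≤ n) (hm : 1 ≤ m) :
    (halfEdges n m o a ho hm).card = a * (m - 1) + (a - 1) * m := by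
  rw [halfEdges, Finset.card_union_of_disjoint, Finset.card_image_of_injective _ (hmap_inj n m o a ho hm),
    Finset.card_image_of_injective _ (vmap_inj n m o a ho)]
  · simp [mul_comm]
  · rw [Finset.disjoint_left]
    rintro e he hv
    simp only [Finset.mem_image, Finset.mem_univ, true_and] at he hv
    obtain ⟨⟨i, j⟩, rfl⟩ := he
    obtain ⟨⟨i', j'⟩, h⟩ := hv
    simp only [hmap, vmap, Sym2.eq_iff, Prod.ext_iff, Fin.ext_iff] at h
    omega

lemma halfEdges_rows (n m o a : ℕ) (ho : o + a ≤ n) (hm : 1 ≤ m) :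
    ∀ e ∈ halfEdges n m o a ho hm, ∀ v ∈ e, o ≤ v.1.val ∧ v.1.val < o + a := by
  intro e he v hv
  simp only [halfEdges, Finset.mem_union, Finset.mem_image, Finset.mem_univ, true_and] at he
  rcases he with ⟨⟨i, j⟩, rfl⟩ | ⟨⟨i, j⟩, rfl⟩ <;>
  · simp only [hmap, vmap, Sym2.mem_iff] at hv
    have := i.isLt
    rcases hv with rfl | rfl <;> simp <;> omega

lemma halfEdges_subset (n m o a : ℕ) (ho : o + a ≤ n) (hm : 1 ≤ m) :
    ↑(halfEdges n m o a ho hm) ⊆ (gridGraph n m).edgeSet := by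
  intro e he
  simp only [Finset.mem_coe, halfEdges, Finset.mem_union, Finset.mem_image,
    Finset.mem_univ, true_and] at he
  rcases he with ⟨⟨i, j⟩, rfl⟩ | ⟨⟨i, j⟩, rfl⟩ <;>
    simp only [hmap, vmap, mem_edgeSet, gridGraph, boxProd_adj, pathGraph_adj]
  · exact Or.inr ⟨Or.inl (by simp), trivial⟩
  · exact Or.inl ⟨Or.inl (by simp), trivial⟩

theorem grid_even_not_complete (n m : ℕ) (hn : 2 ≤ n) (hne : Even n)
    (hm : 1 ≤ m) :
    (∃ C D : Finset (Sym2 (Fin n × Fin m)),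
      ↑C ⊆ (gridGraph n m).edgeSet ∧ ↑D ⊆ (gridGraph n m).edgeSet ∧
      C.card = m * n - m - n / 2 ∧ D.card = m * n - m - n / 2 ∧
      ∀ c ∈ C, ∀ d ∈ D, ¬ shareVertex c d) ∧
    ∀ r, 0 < r → r ≤ m * n - m - n / 2 → ¬ SuperLineComplete (gridGraph n m) r := by
  obtain ⟨a, rfl⟩ := hne
  have ha : 1 ≤ a := by omega
  have ho1 : 0 + a ≤ a + a := by omega
  have ho2 : a + a ≤ a + a := le_refl _
  set C := halfEdges (a + a) m 0 a ho1 hm with hC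
  set D := halfEdges (a + a) m a a ho2 hm with hD
  have hcard : a * (m - 1) + (a - 1) * m = m * (a + a) - m - (a + a) / 2 := by
    obtain ⟨a', rfl⟩ := Nat.exists_eq_add_of_le ha
    obtain ⟨m', rfl⟩ := Nat.exists_eq_add_of_le hm
    have h1 : (1 + a') * (1 + m' - 1) + (1 + a' - 1) * (1 + m')
        = 2 * ((1 + a') * (1 + m')) - (1 + m') - (1 + a') := by
      simp only [Nat.add_sub_cancel_left]
      have : 2 * ((1 + a') * (1 + m')) = (1 + a') * m' + a' * (1 + m') + (1 + m') + (1 + a') := by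
        ring
      omega
    have h2 : (1 + m') * ((1 + a') + (1 + a')) = 2 * ((1 + a') * (1 + m')) := by ring
    have h3 : ((1 + a') + (1 + a')) / 2 = 1 + a' := by omega
    rw [h1, h2, h3]
  have hnoshare : ∀ c ∈ C, ∀ d ∈ D, ¬ shareVertex c d := by
    intro c hc d hd ⟨v, hvc, hvd⟩
    have h1 := halfEdges_rows (a + a) m 0 a ho1 hm c hc v hvc
    have h2 := halfEdges_rows (a + a) m a a ho2 hm d hd v hvd
    omega
  have hCsub := halfEdges_subset (a + a) m 0 a ho1 hm
  have hDsub := halfEdges_subset (a + a) m a a ho2 hm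
  have hCcard : C.card = m * (a + a) - m - (a + a) / 2 := by
    rw [hC, halfEdges_card, hcard]
  have hDcard : D.card = m * (a + a) - m - (a + a) / 2 := by
    rw [hD, halfEdges_card, hcard]
  refine ⟨⟨C, D, hCsub, hDsub, hCcard, hDcard, hnoshare⟩, ?_⟩
  intro r hr hle hSC
  obtain ⟨A, hAC, hAcard⟩ := Finset.exists_subset_card_eq (s := C) (n := r) (by omega)
  obtain ⟨B, hBD, hBcard⟩ := Finset.exists_subset_card_eq (s := D) (n := r) (by omega)
  have hAB : A ≠ B := by
    intro h
    obtain ⟨e, he⟩ := Finset.card_pos.mp (hAcard ▸ hr)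
    exact hnoshare e (hAC he) e (hBD (h ▸ he))
      ⟨e.out.1, Sym2.out_fst_mem e, Sym2.out_fst_mem e⟩
  obtain ⟨e, heA, f, hfB, _, hsh⟩ :=
    hSC A B (le_trans (Finset.coe_subset.mpr hAC) hCsub)
      (le_trans (Finset.coe_subset.mpr hBD) hDsub) hAcard hBcard hAB
  exact hnoshare e (hAC heA) f (hBD hfB) hsh
end

section
/- Let n, m be odd, n, m ≥ 3. The grid graph P_n × P_m contains two edge sets C and D, each of size (2mn − m − n − (m+3))/2 = mn − m − (n+3)/2, such that no edge of C shares a vertex with any edge of D. Hence L_r(P_n × P_m) is not complete for r = mn − m − (n+3)/2. -/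
open SimpleGraph

open Fin.NatCast

lemma finCast_inj {n a b : ℕ} [NeZero n] (ha : a < n) (hb : b < n)
    (h : (a : Fin n) = (b : Fin n)) : a = b := by
  have := congrArg Fin.val h
  rwa [Fin.val_cast_of_lt ha, Fin.val_cast_of_lt hb] at this

lemma buildEdges (n m : ℕ) [NeZero n] [NeZero m]
    (Pr : ℕ × ℕ → Prop)
    (V H : Finset (ℕ × ℕ))
    (hV : ∀ x ∈ V, x.1 + 1 < n ∧ x.2 < m)
    (hH : ∀ x ∈ H, x.1 < n ∧ x.2 + 1 < m)
    (hPV : ∀ x ∈ V, Pr (x.1, x.2) ∧ Pr (x.1 + 1, x.2))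
    (hPH : ∀ x ∈ H, Pr (x.1, x.2) ∧ Pr (x.1, x.2 + 1)) :
    ∃ C : Finset (Sym2 (Fin n × Fin m)),
      ↑C ⊆ (gridGraph n m).edgeSet ∧ C.card = V.card + H.card ∧
      ∀ e ∈ C, ∀ v : Fin n × Fin m, v ∈ e → Pr (v.1.val, v.2.val) := by
  classical
  set fV : ℕ × ℕ → Sym2 (Fin n × Fin m) :=
    fun x => s((((x.1 : ℕ) : Fin n), ((x.2 : ℕ) : Fin m)),
               (((x.1 + 1 : ℕ) : Fin n), ((x.2 : ℕ) : Fin m))) with hfV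
  set fH : ℕ × ℕ → Sym2 (Fin n × Fin m) :=
    fun x => s((((x.1 : ℕ) : Fin n), ((x.2 : ℕ) : Fin m)),
               (((x.1 : ℕ) : Fin n), ((x.2 + 1 : ℕ) : Fin m))) with hfH
  have hinjV : Set.InjOn fV ↑V := by
    rintro ⟨x1, x2⟩ hx ⟨y1, y2⟩ hy h
    obtain ⟨bx1, bx2⟩ := hV _ hx
    obtain ⟨by1, by2⟩ := hV _ hy
    simp only [hfV, Sym2.eq_iff, Prod.mk.injEq] at h
    rcases h with ⟨⟨h1, h2⟩, h3, h4⟩ | ⟨⟨h1, h2⟩, h3, h4⟩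
    · have e1 := finCast_inj (by omega) (by omega) h1
      have e2 := finCast_inj (by omega) (by omega) h2
      simp [e1, e2]
    · have e1 := finCast_inj (by omega) (by omega) h1
      have e3 := finCast_inj (by omega) (by omega) h3
      omega
  have hinjH : Set.InjOn fH ↑H := by
    rintro ⟨x1, x2⟩ hx ⟨y1, y2⟩ hy h
    obtain ⟨bx1, bx2⟩ := hH _ hx
    obtain ⟨by1, by2⟩ := hH _ hy
    simp only [hfH, Sym2.eq_iff, Prod.mk.injEq] at h
    rcases h with ⟨⟨h1, h2⟩, h3, h4⟩ | ⟨⟨h1, h2⟩, h3, h4⟩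
    · have e1 := finCast_inj (by omega) (by omega) h1
      have e2 := finCast_inj (by omega) (by omega) h2
      simp [e1, e2]
    · have e2 := finCast_inj (by omega) (by omega) h2
      have e4 := finCast_inj (by omega) (by omega) h4
      omega
  have hdisj : Disjoint (V.image fV) (H.image fH) := by
    rw [Finset.disjoint_left]
    rintro e he hf
    obtain ⟨⟨x1, x2⟩, hx, rfl⟩ := Finset.mem_image.mp he
    obtain ⟨⟨y1, y2⟩, hy, h⟩ := Finset.mem_image.mp hf
    obtain ⟨bx1, bx2⟩ := hV _ hx
    obtain ⟨by1, by2⟩ := hH _ hy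
    simp only [hfV, hfH, Sym2.eq_iff, Prod.mk.injEq] at h
    rcases h with ⟨⟨h1, h2⟩, h3, h4⟩ | ⟨⟨h1, h2⟩, h3, h4⟩
    · have e2 := finCast_inj (by omega) (by omega) h2
      have e4 := finCast_inj (by omega) (by omega) h4
      omega
    · have e1 := finCast_inj (by omega) (by omega) h1
      have e3 := finCast_inj (by omega) (by omega) h3
      omega
  refine ⟨V.image fV ∪ H.image fH, ?_, ?_, ?_⟩
  · intro e he
    simp only [Finset.coe_union, Set.mem_union, Finset.coe_image, Set.mem_image,
      Finset.mem_coe] at he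
    rcases he with ⟨⟨x1, x2⟩, hx, rfl⟩ | ⟨⟨x1, x2⟩, hx, rfl⟩
    · obtain ⟨b1, b2⟩ := hV _ hx
      simp only [hfV]
      rw [SimpleGraph.mem_edgeSet]
      show ((pathGraph n) □ (pathGraph m)).Adj _ _
      rw [SimpleGraph.boxProd_adj]
      left
      constructor
      · rw [SimpleGraph.pathGraph_adj]
        left
        simp only
        rw [Fin.val_cast_of_lt (by omega), Fin.val_cast_of_lt b1]
      · rfl
    · obtain ⟨b1, b2⟩ := hH _ hx
      simp only [hfH]
      rw [SimpleGraph.mem_edgeSet]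
      show ((pathGraph n) □ (pathGraph m)).Adj _ _
      rw [SimpleGraph.boxProd_adj]
      right
      constructor
      · rw [SimpleGraph.pathGraph_adj]
        left
        simp only
        rw [Fin.val_cast_of_lt (by omega), Fin.val_cast_of_lt b2]
      · rfl
  · rw [Finset.card_union_of_disjoint hdisj, Finset.card_image_of_injOn hinjV,
      Finset.card_image_of_injOn hinjH]
  · intro e he v hv
    simp only [Finset.mem_union, Finset.mem_image] at he
    rcases he with ⟨⟨x1, x2⟩, hx, rfl⟩ | ⟨⟨x1, x2⟩, hx, rfl⟩
    · obtain ⟨b1, b2⟩ := hV _ hx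
      obtain ⟨p1, p2⟩ := hPV _ hx
      simp only [hfV, Sym2.mem_iff] at hv
      rcases hv with rfl | rfl
      · show Pr (((x1 : ℕ) : Fin n).val, ((x2 : ℕ) : Fin m).val)
        rw [Fin.val_cast_of_lt (by omega : x1 < n), Fin.val_cast_of_lt b2]
        exact p1
      · show Pr (((x1 + 1 : ℕ) : Fin n).val, ((x2 : ℕ) : Fin m).val)
        rw [Fin.val_cast_of_lt b1, Fin.val_cast_of_lt b2]
        exact p2
    · obtain ⟨b1, b2⟩ := hH _ hx
      obtain ⟨p1, p2⟩ := hPH _ hx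
      simp only [hfH, Sym2.mem_iff] at hv
      rcases hv with rfl | rfl
      · show Pr (((x1 : ℕ) : Fin n).val, ((x2 : ℕ) : Fin m).val)
        rw [Fin.val_cast_of_lt b1, Fin.val_cast_of_lt (by omega : x2 < m)]
        exact p1
      · show Pr (((x1 : ℕ) : Fin n).val, ((x2 + 1 : ℕ) : Fin m).val)
        rw [Fin.val_cast_of_lt b1, Fin.val_cast_of_lt b2]
        exact p2

theorem grid_odd_odd_not_complete (n m : ℕ) (hn : 3 ≤ n) (hno : Odd n)
    (hm : 3 ≤ m) (hmo : Odd m) :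
    (∃ C D : Finset (Sym2 (Fin n × Fin m)),
      ↑C ⊆ (gridGraph n m).edgeSet ∧ ↑D ⊆ (gridGraph n m).edgeSet ∧
      C.card = m * n - m - (n + 3) / 2 ∧ D.card = m * n - m - (n + 3) / 2 ∧
      ∀ c ∈ C, ∀ d ∈ D, ¬ shareVertex c d) ∧
    ¬ SuperLineComplete (gridGraph n m) (m * n - m - (n + 3) / 2) := by
  classical
  obtain ⟨p, hp⟩ := hno
  obtain ⟨P, rfl⟩ : ∃ P, p = P + 1 := ⟨p - 1, by omega⟩
  obtain ⟨q, hq⟩ := hmo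
  obtain ⟨Q, rfl⟩ : ∃ Q, q = Q + 1 := ⟨q - 1, by omega⟩
  subst hp hq
  haveI : NeZero (2 * (P + 1) + 1) := ⟨by omega⟩
  haveI : NeZero (2 * (Q + 1) + 1) := ⟨by omega⟩
  -- the key count
  have hk : (2 * (Q + 1) + 1) * (2 * (P + 1) + 1) - (2 * (Q + 1) + 1) -
      (2 * (P + 1) + 1 + 3) / 2 = 4 * (P * Q) + 5 * P + 4 * Q + 3 := by
    have h1 : (2 * (Q + 1) + 1) * (2 * (P + 1) + 1)
        = 4 * (P * Q) + 6 * P + 6 * Q + 9 := by ring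
    rw [h1]
    generalize P * Q = R
    omega
  -- bottom region
  set Pbot : ℕ × ℕ → Prop := fun x => P + 1 < x.1 ∨ (x.1 = P + 1 ∧ x.2 < Q + 1) with hPbot
  set Ptop : ℕ × ℕ → Prop := fun x => x.1 < P + 1 ∨ (x.1 = P + 1 ∧ Q + 1 ≤ x.2) with hPtop
  obtain ⟨C, hCsub, hCcard, hCreg⟩ :=
    buildEdges (2 * (P + 1) + 1) (2 * (Q + 1) + 1) Pbot
      ((Finset.Ico (P + 2) (2 * P + 2)) ×ˢ Finset.range (2 * (Q + 1) + 1) ∪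
        ({P + 1} : Finset ℕ) ×ˢ Finset.range (Q + 1))
      ((Finset.Ico (P + 2) (2 * (P + 1) + 1)) ×ˢ Finset.range (2 * (Q + 1)) ∪
        ({P + 1} : Finset ℕ) ×ˢ Finset.range Q)
      (by rintro ⟨x1, x2⟩ hx
          simp only [Finset.mem_union, Finset.mem_product, Finset.mem_Ico,
            Finset.mem_range, Finset.mem_singleton] at hx
          omega)
      (by rintro ⟨x1, x2⟩ hx
          simp only [Finset.mem_union, Finset.mem_product, Finset.mem_Ico,
            Finset.mem_range, Finset.mem_singleton] at hx
          omega)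
      (by rintro ⟨x1, x2⟩ hx
          simp only [Finset.mem_union, Finset.mem_product, Finset.mem_Ico,
            Finset.mem_range, Finset.mem_singleton] at hx
          simp only [hPbot]
          omega)
      (by rintro ⟨x1, x2⟩ hx
          simp only [Finset.mem_union, Finset.mem_product, Finset.mem_Ico,
            Finset.mem_range, Finset.mem_singleton] at hx
          simp only [hPbot]
          omega)
  obtain ⟨D, hDsub, hDcard, hDreg⟩ :=
    buildEdges (2 * (P + 1) + 1) (2 * (Q + 1) + 1) Ptop
      ((Finset.Ico 0 P) ×ˢ Finset.range (2 * (Q + 1) + 1) ∪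
        ({P} : Finset ℕ) ×ˢ Finset.Ico (Q + 1) (2 * Q + 2))
      ((Finset.Ico 0 (P + 1)) ×ˢ Finset.range (2 * (Q + 1)) ∪
        ({P + 1} : Finset ℕ) ×ˢ Finset.Ico (Q + 1) (2 * Q + 1))
      (by rintro ⟨x1, x2⟩ hx
          simp only [Finset.mem_union, Finset.mem_product, Finset.mem_Ico,
            Finset.mem_range, Finset.mem_singleton] at hx
          omega)
      (by rintro ⟨x1, x2⟩ hx
          simp only [Finset.mem_union, Finset.mem_product, Finset.mem_Ico,
            Finset.mem_range, Finset.mem_singleton] at hx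
          omega)
      (by rintro ⟨x1, x2⟩ hx
          simp only [Finset.mem_union, Finset.mem_product, Finset.mem_Ico,
            Finset.mem_range, Finset.mem_singleton] at hx
          simp only [hPtop]
          omega)
      (by rintro ⟨x1, x2⟩ hx
          simp only [Finset.mem_union, Finset.mem_product, Finset.mem_Ico,
            Finset.mem_range, Finset.mem_singleton] at hx
          simp only [hPtop]
          omega)
  -- cards
  have hCval : C.card = 4 * (P * Q) + 5 * P + 4 * Q + 3 := by
    rw [hCcard]
    rw [Finset.card_union_of_disjoint, Finset.card_union_of_disjoint]
    · simp only [Finset.card_product, Nat.card_Ico, Finset.card_range,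
        Finset.card_singleton]
      have h1 : 2 * P + 2 - (P + 2) = P := by omega
      have h2 : 2 * (P + 1) + 1 - (P + 2) = P + 1 := by omega
      rw [h1, h2]
      ring
    · rw [Finset.disjoint_left]
      rintro ⟨x1, x2⟩ hx hy
      simp only [Finset.mem_product, Finset.mem_Ico, Finset.mem_range,
        Finset.mem_singleton] at hx hy
      omega
    · rw [Finset.disjoint_left]
      rintro ⟨x1, x2⟩ hx hy
      simp only [Finset.mem_product, Finset.mem_Ico, Finset.mem_range,
        Finset.mem_singleton] at hx hy
      omega
  have hDval : D.card = 4 * (P * Q) + 5 * P + 4 * Q + 3 := by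
    rw [hDcard]
    rw [Finset.card_union_of_disjoint, Finset.card_union_of_disjoint]
    · simp only [Finset.card_product, Nat.card_Ico, Finset.card_range,
        Finset.card_singleton]
      have h1 : P - 0 = P := by omega
      have h2 : P + 1 - 0 = P + 1 := by omega
      have h3 : 2 * Q + 2 - (Q + 1) = Q + 1 := by omega
      have h4 : 2 * Q + 1 - (Q + 1) = Q := by omega
      rw [h1, h2, h3, h4]
      ring
    · rw [Finset.disjoint_left]
      rintro ⟨x1, x2⟩ hx hy
      simp only [Finset.mem_product, Finset.mem_Ico, Finset.mem_range,
        Finset.mem_singleton] at hx hy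
      omega
    · rw [Finset.disjoint_left]
      rintro ⟨x1, x2⟩ hx hy
      simp only [Finset.mem_product, Finset.mem_Ico, Finset.mem_range,
        Finset.mem_singleton] at hx hy
      omega
  have hCk : C.card = (2 * (Q + 1) + 1) * (2 * (P + 1) + 1) - (2 * (Q + 1) + 1) -
      (2 * (P + 1) + 1 + 3) / 2 := by rw [hCval, hk]
  have hDk : D.card = (2 * (Q + 1) + 1) * (2 * (P + 1) + 1) - (2 * (Q + 1) + 1) -
      (2 * (P + 1) + 1 + 3) / 2 := by rw [hDval, hk]
  have hnoshare : ∀ c ∈ C, ∀ d ∈ D, ¬ shareVertex c d := by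
    intro c hc d hd ⟨v, hvc, hvd⟩
    have h1 := hCreg c hc v hvc
    have h2 := hDreg d hd v hvd
    simp only [hPbot] at h1
    simp only [hPtop] at h2
    omega
  have hCD : C ≠ D := by
    intro h
    have hne : C.Nonempty := by
      rw [← Finset.card_pos, hCval]; omega
    obtain ⟨e, he⟩ := hne
    exact hnoshare e he e (h ▸ he) ⟨(Quot.out e).1, Sym2.out_fst_mem e, Sym2.out_fst_mem e⟩
  refine ⟨⟨C, D, hCsub, hDsub, hCk, hDk, hnoshare⟩, ?_⟩
  intro hSL
  obtain ⟨e, he, f, hf, _, hsh⟩ := hSL C D hCsub hDsub hCk hDk hCD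
  exact hnoshare e he f hf hsh
end
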